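/- arXiv:2012.01992 — 8 statements merged into one kernel-verified Lean document; each statement's English description precedes it below -/
import Mathlib

section
/- Let n ≥ 1 and let v = (p,q) be a vertex of the n-Queens' graph Q(n), with 1 ≤ p,q ≤ n. Let k = min(p, q, n+1−p, n+1−q), so that v lies in the k-th peripheral vertex subset. Then the degree of v in Q(n) equals 3(n−1) + 2(k−1). -/
/-- The `n`-Queens' graph: vertices are the squares of the `n × n` chessboard
(coordinates `0 ≤ i, j ≤ n-1`, i.e. `Fin n × Fin n`); two distinct squares are
adjacent iff they share a row, a column, or a diagonal. -/
def queensGraph (n : ℕ) : SimpleGraph (Fin n × Fin n) where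
  Adj u v := u ≠ v ∧ (u.1 = v.1 ∨ u.2 = v.2 ∨
    u.1.val + u.2.val = v.1.val + v.2.val ∨ u.1.val + v.2.val = v.1.val + u.2.val)
  symm := by
    constructor
    rintro u v ⟨hne, h⟩
    refine ⟨hne.symm, ?_⟩
    rcases h with h | h | h | h
    exacts [Or.inl h.symm, Or.inr (Or.inl h.symm), Or.inr (Or.inr (Or.inl h.symm)),
      Or.inr (Or.inr (Or.inr h.symm))]
  loopless := ⟨fun u ⟨hne, _⟩ => hne rfl⟩

instance (n : ℕ) : DecidableRel (queensGraph n).Adj := fun u v =>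
  inferInstanceAs (Decidable (u ≠ v ∧ (u.1 = v.1 ∨ u.2 = v.2 ∨
    u.1.val + u.2.val = v.1.val + v.2.val ∨ u.1.val + v.2.val = v.1.val + u.2.val)))

open Finset

/-- Number of squares on the anti-diagonal through `(a, b)`. -/
lemma queens_card_antidiag (n a b : ℕ) (ha : a < n) (hb : b < n) :
    (univ.filter (fun u : Fin n × Fin n => u.1.val + u.2.val = a + b)).card
      = min (a + b) (n - 1) + 1 - (a + b + 1 - n) := by
  rw [← Nat.card_Icc]
  refine Finset.card_bij' (i := fun u _ => u.1.val)
    (j := fun c hc => (⟨c, by simp only [mem_Icc] at hc; omega⟩,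
      ⟨a + b - c, by simp only [mem_Icc] at hc; omega⟩)) ?_ ?_ ?_ ?_
  · rintro ⟨⟨x,hx⟩,⟨y,hy⟩⟩ hu
    simp only [mem_filter, mem_univ, true_and] at hu
    simp only [mem_Icc]
    omega
  · rintro c hc
    simp only [mem_Icc] at hc
    simp only [mem_filter, mem_univ, true_and]
    omega
  · rintro ⟨⟨x,hx⟩,⟨y,hy⟩⟩ hu
    simp only [mem_filter, mem_univ, true_and] at hu
    simp only [Prod.mk.injEq, Fin.mk.injEq, true_and]
    omega
  · rintro c hc; rfl

/-- Number of squares on the main diagonal through `(a, b)`. -/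
lemma queens_card_diag (n a b : ℕ) (ha : a < n) (hb : b < n) :
    (univ.filter (fun u : Fin n × Fin n => u.1.val + b = a + u.2.val)).card
      = (n - 1 - (b - a)) + 1 - (a - b) := by
  rw [← Nat.card_Icc]
  refine Finset.card_bij' (i := fun u _ => u.1.val)
    (j := fun c hc => (⟨c, by simp only [mem_Icc] at hc; omega⟩,
      ⟨c + b - a, by simp only [mem_Icc] at hc; omega⟩)) ?_ ?_ ?_ ?_
  · rintro ⟨⟨x,hx⟩,⟨y,hy⟩⟩ hu
    simp only [mem_filter, mem_univ, true_and] at hu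
    simp only [mem_Icc]
    omega
  · rintro c hc
    simp only [mem_Icc] at hc
    simp only [mem_filter, mem_univ, true_and]
    omega
  · rintro ⟨⟨x,hx⟩,⟨y,hy⟩⟩ hu
    simp only [mem_filter, mem_univ, true_and] at hu
    simp only [Prod.mk.injEq, Fin.mk.injEq, true_and]
    omega
  · rintro c hc; rfl

/-- Number of squares in the row through `(a, b)`. -/
lemma queens_card_row (n a b : ℕ) (ha : a < n) (hb : b < n) :
    (univ.filter (fun u : Fin n × Fin n => u.1.val = a)).card = n := by
  have h : (univ.filter (fun u : Fin n × Fin n => u.1.val = a)).card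
      = (univ : Finset (Fin n)).card := by
    refine Finset.card_bij' (i := fun u _ => u.2) (j := fun c _ => (⟨a, ha⟩, c)) ?_ ?_ ?_ ?_
    · intros; exact mem_univ _
    · rintro c _; simp
    · rintro ⟨⟨x,hx⟩,y⟩ hu
      simp only [mem_filter, mem_univ, true_and] at hu
      simp only [Prod.mk.injEq, Fin.mk.injEq]
      exact ⟨hu.symm, trivial⟩
    · rintro c hc; rfl
  simpa using h

/-- Number of squares in the column through `(a, b)`. -/
lemma queens_card_col (n a b : ℕ) (ha : a < n) (hb : b < n) :
    (univ.filter (fun u : Fin n × Fin n => u.2.val = b)).card = n := by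
  have h : (univ.filter (fun u : Fin n × Fin n => u.2.val = b)).card
      = (univ : Finset (Fin n)).card := by
    refine Finset.card_bij' (i := fun u _ => u.1) (j := fun c _ => (c, ⟨b, hb⟩)) ?_ ?_ ?_ ?_
    · intros; exact mem_univ _
    · rintro c _; simp
    · rintro ⟨x,⟨y,hy⟩⟩ hu
      simp only [mem_filter, mem_univ, true_and] at hu
      simp only [Prod.mk.injEq, Fin.mk.injEq]
      exact ⟨trivial, hu.symm⟩
    · rintro c hc; rfl
  simpa using h

/-- a vertex `v` of `Q(n)` in the `k`-th peripheral subset (where, in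
1-based coordinates `(p,q) = (v.1+1, v.2+1)`, `k = min (p, q, n+1-p, n+1-q)`)
has degree `3(n-1) + 2(k-1)`. -/
theorem queens_degree (n : ℕ) (hn : 1 ≤ n) (v : Fin n × Fin n)
    (k : ℕ) (hk : k = min (min (v.1.val + 1) (v.2.val + 1)) (min (n - v.1.val) (n - v.2.val))) :
    (queensGraph n).degree v = 3 * (n - 1) + 2 * (k - 1) := by
  classical
  obtain ⟨⟨a, ha⟩, ⟨b, hb⟩⟩ := v
  simp only at hk
  set V : Fin n × Fin n := (⟨a, ha⟩, ⟨b, hb⟩) with hV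
  set A := (univ.filter (fun u : Fin n × Fin n => u.1.val = a)) with hA
  set B := (univ.filter (fun u : Fin n × Fin n => u.2.val = b)) with hB
  set C := (univ.filter (fun u : Fin n × Fin n => u.1.val + u.2.val = a + b)) with hC
  set D := (univ.filter (fun u : Fin n × Fin n => u.1.val + b = a + u.2.val)) with hD
  have hN : (queensGraph n).neighborFinset V
      = ((A.erase V ∪ B.erase V) ∪ C.erase V) ∪ D.erase V := by
    ext u
    obtain ⟨⟨x, hx⟩, ⟨y, hy⟩⟩ := u
    rw [SimpleGraph.mem_neighborFinset]
    simp only [SimpleGraph.mem_neighborFinset, queensGraph, hA, hB, hC, hD, hV,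
      mem_union, mem_erase, mem_filter, mem_univ, true_and, ne_eq, Prod.mk.injEq,
      Fin.mk.injEq, not_and]
    omega
  have dAB : Disjoint (A.erase V) (B.erase V) := by
    refine Finset.disjoint_left.2 ?_
    rintro ⟨⟨x, hx⟩, ⟨y, hy⟩⟩ h1 h2
    simp only [hA, hB, hV, mem_erase, mem_filter, mem_univ, true_and, ne_eq,
      Prod.mk.injEq, Fin.mk.injEq, not_and] at h1 h2
    omega
  have dABC : Disjoint (A.erase V ∪ B.erase V) (C.erase V) := by
    rw [Finset.disjoint_union_left]
    constructor <;>
    · refine Finset.disjoint_left.2 ?_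
      rintro ⟨⟨x, hx⟩, ⟨y, hy⟩⟩ h1 h2
      simp only [hA, hB, hC, hV, mem_erase, mem_filter, mem_univ, true_and, ne_eq,
        Prod.mk.injEq, Fin.mk.injEq, not_and] at h1 h2
      omega
  have dABCD : Disjoint ((A.erase V ∪ B.erase V) ∪ C.erase V) (D.erase V) := by
    rw [Finset.disjoint_union_left, Finset.disjoint_union_left]
    refine ⟨⟨?_, ?_⟩, ?_⟩ <;>
    · refine Finset.disjoint_left.2 ?_
      rintro ⟨⟨x, hx⟩, ⟨y, hy⟩⟩ h1 h2
      simp only [hA, hB, hC, hD, hV, mem_erase, mem_filter, mem_univ, true_and, ne_eq,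
        Prod.mk.injEq, Fin.mk.injEq, not_and] at h1 h2
      omega
  have hVA : V ∈ A := by simp [hA, hV]
  have hVB : V ∈ B := by simp [hB, hV]
  have hVC : V ∈ C := by simp [hC, hV]
  have hVD : V ∈ D := by simp [hD, hV]
  rw [SimpleGraph.degree, hN, Finset.card_union_of_disjoint dABCD,
    Finset.card_union_of_disjoint dABC, Finset.card_union_of_disjoint dAB,
    Finset.card_erase_of_mem hVA, Finset.card_erase_of_mem hVB,
    Finset.card_erase_of_mem hVC, Finset.card_erase_of_mem hVD,
    hA, hB, hC, hD, queens_card_row n a b ha hb, queens_card_col n a b ha hb,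
    queens_card_antidiag n a b ha hb, queens_card_diag n a b ha hb]
  omega
end

section
/- The stability (independence) number of the n-Queens' graph satisfies: α(Q(2)) = 1, α(Q(3)) = 2, and α(Q(n)) = n for every n ≥ 4. -/
/-- The stability (independence) number of a graph: the maximum cardinality of a
set of pairwise non-adjacent vertices. -/
noncomputable def indepNum {V : Type*} (G : SimpleGraph V) : ℕ :=
  sSup {k | ∃ s : Finset V, s.card = k ∧ ∀ u ∈ s, ∀ v ∈ s, u ≠ v → ¬ G.Adj u v}

/-- Column function for even `n`, `n % 6 ≠ 2`. -/
def cA (n i : ℕ) : ℕ := if i < n / 2 then 2 * i + 1 else 2 * i - n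

/-- Column function for even `n`, `n % 6 = 2`. -/
def cB (n i : ℕ) : ℕ :=
  if i < n / 2 then
    (if 2 * i + n / 2 ≤ n then 2 * i + n / 2 - 1 else 2 * i + n / 2 - 1 - n)
  else
    (if n + n / 2 ≤ 2 * i + 2 then 2 * i + 2 - n - n / 2 else 2 * i + 2 - n / 2)

def qcE (n i : ℕ) : ℕ := if n % 6 = 2 then cB n i else cA n i

def qc (n i : ℕ) : ℕ :=
  if n % 2 = 0 then qcE n i else if i = n - 1 then n - 1 else qcE (n - 1) i

set_option maxHeartbeats 2000000 in
lemma qc_lt (n : ℕ) (hn : 4 ≤ n) (i : ℕ) (hi : i < n) : qc n i < n := by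
  simp only [qc, qcE, cA, cB]; split_ifs <;> omega

set_option maxHeartbeats 4000000 in
lemma qc_valid (n : ℕ) (hn : 4 ≤ n) (i j : ℕ) (hi : i < n) (hj : j < n) (hij : i ≠ j) :
    qc n i ≠ qc n j ∧ i + qc n i ≠ j + qc n j ∧ i + qc n j ≠ j + qc n i := by
  simp only [qc, qcE, cA, cB]; split_ifs <;> omega

/-- The independent set of `n` non-attacking queens. -/
def qs (n : ℕ) : Finset (Fin n × Fin n) :=
  Finset.univ.image (fun i : Fin n => (i, ⟨qc n i.val % n, Nat.mod_lt _ i.pos⟩))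

lemma qs_card (n : ℕ) : (qs n).card = n := by
  rw [qs, Finset.card_image_of_injective _ (fun i j h => (Prod.mk.injEq _ _ _ _ ▸ h).1),
    Finset.card_univ, Fintype.card_fin]

lemma qs_indep (n : ℕ) (hn : 4 ≤ n) :
    ∀ u ∈ qs n, ∀ v ∈ qs n, u ≠ v → ¬ (queensGraph n).Adj u v := by
  intro u hu v hv huv hadj
  simp only [qs, Finset.mem_image, Finset.mem_univ, true_and] at hu hv
  obtain ⟨i, rfl⟩ := hu
  obtain ⟨j, rfl⟩ := hv
  have hij : i ≠ j := fun h => huv (by rw [h])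
  have hij' : (i : ℕ) ≠ (j : ℕ) := fun h => hij (Fin.ext h)
  have h1 := qc_lt n hn i i.isLt
  have h2 := qc_lt n hn j j.isLt
  have h3 := qc_valid n hn i j i.isLt j.isLt hij'
  rcases hadj with ⟨-, h | h | h | h⟩
  · exact hij (by exact h)
  · have : qc n i % n = qc n j % n := Fin.mk.injEq _ _ _ _ ▸ h
    rw [Nat.mod_eq_of_lt h1, Nat.mod_eq_of_lt h2] at this
    exact h3.1 this
  · simp only [Nat.mod_eq_of_lt h1, Nat.mod_eq_of_lt h2] at h
    exact h3.2.1 h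
  · simp only [Nat.mod_eq_of_lt h1, Nat.mod_eq_of_lt h2] at h
    exact h3.2.2 h

lemma indep_le (n : ℕ) (s : Finset (Fin n × Fin n))
    (h : ∀ u ∈ s, ∀ v ∈ s, u ≠ v → ¬ (queensGraph n).Adj u v) : s.card ≤ n := by
  have hinj : Set.InjOn (Prod.fst : Fin n × Fin n → Fin n) ↑s := by
    intro u hu v hv huv
    by_contra hne
    exact h u hu v hv hne ⟨hne, Or.inl huv⟩
  calc s.card = (s.image Prod.fst).card := (Finset.card_image_of_injOn hinj).symm
    _ ≤ Finset.univ.card := Finset.card_le_card (Finset.subset_univ _)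
    _ = n := by rw [Finset.card_univ, Fintype.card_fin]

lemma indepNum_eq_of {V : Type*} (G : SimpleGraph V) (m : ℕ)
    (h1 : ∃ s : Finset V, s.card = m ∧ ∀ u ∈ s, ∀ v ∈ s, u ≠ v → ¬ G.Adj u v)
    (h2 : ∀ k, (∃ s : Finset V, s.card = k ∧ ∀ u ∈ s, ∀ v ∈ s, u ≠ v → ¬ G.Adj u v) → k ≤ m) :
    indepNum G = m :=
  IsGreatest.csSup_eq ⟨h1, fun _ hk => h2 _ hk⟩


set_option maxRecDepth 10000 in
/-- `α(Q(2)) = 1`, `α(Q(3)) = 2` and `α(Q(n)) = n` for `n ≥ 4`. -/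
theorem queens_indepNum :
    indepNum (queensGraph 2) = 1 ∧ indepNum (queensGraph 3) = 2 ∧
      ∀ n : ℕ, 4 ≤ n → indepNum (queensGraph n) = n := by
  refine ⟨?_, ?_, ?_⟩
  · refine indepNum_eq_of _ 1 ⟨{(0, 0)}, rfl, by decide⟩ ?_
    rintro k ⟨s, rfl, hs⟩
    revert hs
    revert s
    decide
  · refine indepNum_eq_of _ 2 ⟨{(0, 0), (1, 2)}, rfl, by decide⟩ ?_
    rintro k ⟨s, rfl, hs⟩
    revert hs
    revert s
    decide
  · intro n hn
    exact indepNum_eq_of _ n ⟨qs n, qs_card n, qs_indep n hn⟩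
      (fun k ⟨s, hcard, hs⟩ => hcard ▸ indep_le n s hs)
end

section
/- If n ≥ 1 and n ≡ 1 (mod 6) or n ≡ 5 (mod 6), then the chromatic number of the n-Queens' graph Q(n) equals n. (An explicit proper coloring assigns to the square in row i and column j, with coordinates taken in {0,1,…,n−1}, the color (j − 2i) mod n.) -/
/-- if `n ≡ 1, 5 (mod 6)` then `χ(Q(n)) = n`. -/
theorem queens_chromatic_of_mod_six (n : ℕ) (hn : 1 ≤ n)
    (h : n % 6 = 1 ∨ n % 6 = 5) :
    (queensGraph n).chromaticNumber = n := by
  have hnz : NeZero n := ⟨by omega⟩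
  have h2 : IsUnit (2 : ZMod n) := by
    rw [show ((2 : ZMod n) = ((2 : ℕ) : ZMod n)) by push_cast; ring,
      ZMod.isUnit_iff_coprime, Nat.Prime.coprime_iff_not_dvd (by norm_num)]
    omega
  have h3 : IsUnit (3 : ZMod n) := by
    rw [show ((3 : ZMod n) = ((3 : ℕ) : ZMod n)) by push_cast; ring,
      ZMod.isUnit_iff_coprime, Nat.Prime.coprime_iff_not_dvd (by norm_num)]
    omega
  -- the explicit coloring
  have C : (queensGraph n).Coloring (ZMod n) := by
    refine SimpleGraph.Coloring.mk
      (fun p => (p.2.val : ZMod n) - 2 * (p.1.val : ZMod n)) ?_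
    rintro u v ⟨hne, hadj⟩ heq
    set a := (u.1.val : ZMod n) with ha'
    set b := (u.2.val : ZMod n) with hb'
    set c := (v.1.val : ZMod n) with hc'
    set d := (v.2.val : ZMod n) with hd'
    have key : a = c ∧ b = d := by
      rcases hadj with h1 | h1 | h1 | h1
      · have hac : a = c := by rw [ha', hc', h1]
        exact ⟨hac, by linear_combination heq + 2 * hac⟩
      · have hbd : b = d := by rw [hb', hd', h1]
        have : (2 : ZMod n) * a = 2 * c := by linear_combination hbd - heq
        have hac := h2.mul_left_cancel this
        exact ⟨hac, hbd⟩
      · have hs : a + b = c + d := by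
          rw [ha', hb', hc', hd']; exact_mod_cast congrArg (Nat.cast : ℕ → ZMod n) h1
        have : (3 : ZMod n) * a = 3 * c := by linear_combination hs - heq
        have hac := h3.mul_left_cancel this
        exact ⟨hac, by linear_combination heq + 2 * hac⟩
      · have hs : a + d = c + b := by
          rw [ha', hb', hc', hd']; exact_mod_cast congrArg (Nat.cast : ℕ → ZMod n) h1
        have hac : a = c := by linear_combination -heq - hs
        exact ⟨hac, by linear_combination heq + 2 * hac⟩
    apply hne
    have e1 : u.1.val = v.1.val := by
      have := congrArg ZMod.val key.1
      rwa [ZMod.val_natCast_of_lt u.1.isLt, ZMod.val_natCast_of_lt v.1.isLt] at this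
    have e2 : u.2.val = v.2.val := by
      have := congrArg ZMod.val key.2
      rwa [ZMod.val_natCast_of_lt u.2.isLt, ZMod.val_natCast_of_lt v.2.isLt] at this
    exact Prod.ext (Fin.ext e1) (Fin.ext e2)
  -- lower bound: row 0 is a clique
  have clique : (queensGraph n).IsClique
      (Finset.univ.image fun j : Fin n => ((⟨0, by omega⟩ : Fin n), j)) := by
    intro x hx y hy hxy
    simp only [Finset.coe_image, Set.mem_image] at hx hy
    obtain ⟨jx, _, rfl⟩ := hx
    obtain ⟨jy, _, rfl⟩ := hy
    exact ⟨hxy, Or.inl rfl⟩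
  have hcard : (Finset.univ.image fun j : Fin n => ((⟨0, by omega⟩ : Fin n), j)).card = n := by
    rw [Finset.card_image_of_injective _ (fun a b hab => by simpa using hab)]
    simp
  refine le_antisymm ?_ ?_
  · have := C.colorable.chromaticNumber_le
    rwa [ZMod.card] at this
  · have := clique.card_le_chromaticNumber
    rwa [hcard] at this
end

section
/- For every n ≥ 5, the chromatic number of the n-Queens' graph satisfies n ≤ χ(Q(n)); moreover χ(Q(n)) = n if n ≡ 1 or 5 (mod 6), and χ(Q(n)) ≤ n + 3 otherwise. -/
private lemma modeq_eq_of_lt {m a b : ℕ} (h : a ≡ b [MOD m]) (ha : a < m) (hb : b < m) :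
    a = b := by
  rwa [Nat.ModEq, Nat.mod_eq_of_lt ha, Nat.mod_eq_of_lt hb] at h

/-- If `n ≤ m` and `m` is coprime to `2` and `3`, the coloring
`(i,j) ↦ (2i+j) mod m` is a proper coloring of the queens graph. -/
lemma queens_colorable (n m : ℕ) (hm : 0 < m) (hnm : n ≤ m)
    (hd2 : ¬ 2 ∣ m) (hd3 : ¬ 3 ∣ m) : (queensGraph n).Colorable m := by
  have h2 : Nat.gcd m 2 = 1 := Nat.Coprime.symm (Nat.Prime.coprime_iff_not_dvd Nat.prime_two |>.mpr hd2)
  have h3 : Nat.gcd m 3 = 1 := Nat.Coprime.symm (Nat.Prime.coprime_iff_not_dvd Nat.prime_three |>.mpr hd3)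
  refine ⟨SimpleGraph.Coloring.mk
    (fun u => ⟨(2 * u.1.val + u.2.val) % m, Nat.mod_lt _ hm⟩) ?_⟩
  rintro ⟨⟨i, hi⟩, ⟨j, hj⟩⟩ ⟨⟨p, hp⟩, ⟨q, hq⟩⟩ ⟨hne, hadj⟩ hc
  simp only [Fin.mk.injEq] at hc
  have hmod : 2 * i + j ≡ 2 * p + q [MOD m] := hc
  have hi' : i < m := lt_of_lt_of_le hi hnm
  have hj' : j < m := lt_of_lt_of_le hj hnm
  have hp' : p < m := lt_of_lt_of_le hp hnm
  have hq' : q < m := lt_of_lt_of_le hq hnm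
  have hne' : ¬ (i = p ∧ j = q) := by
    rintro ⟨rfl, rfl⟩; exact hne rfl
  rcases hadj with h | h | h | h
  · -- same row
    have hip : i = p := congrArg Fin.val h
    subst hip
    have : j ≡ q [MOD m] := Nat.ModEq.add_left_cancel' (2 * i) hmod
    exact hne' ⟨rfl, modeq_eq_of_lt this hj' hq'⟩
  · -- same column
    have hjq : j = q := congrArg Fin.val h
    subst hjq
    have h1 : 2 * i ≡ 2 * p [MOD m] := Nat.ModEq.add_right_cancel' j hmod
    have : i ≡ p [MOD m] := Nat.ModEq.cancel_left_of_coprime h2 h1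
    exact hne' ⟨modeq_eq_of_lt this hi' hp', rfl⟩
  · -- same diagonal: i + j = p + q
    have h' : i + j = p + q := h
    have h1 : i + (p + q) ≡ p + (p + q) [MOD m] := by
      calc i + (p + q) = 2 * i + j := by omega
        _ ≡ 2 * p + q [MOD m] := hmod
        _ = p + (p + q) := by omega
    have : i ≡ p [MOD m] := Nat.ModEq.add_right_cancel' (p + q) h1
    have hip : i = p := modeq_eq_of_lt this hi' hp'
    exact hne' ⟨hip, by omega⟩
  · -- same antidiagonal: i + q = p + j
    have h' : i + q = p + j := h
    have h1 : 2 * i + j + 2 * q ≡ 2 * p + q + 2 * q [MOD m] := hmod.add_right (2 * q)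
    have h2' : 2 * p + 3 * j ≡ 2 * p + 3 * q [MOD m] := by
      calc 2 * p + 3 * j = 2 * i + j + 2 * q := by omega
        _ ≡ 2 * p + q + 2 * q [MOD m] := h1
        _ = 2 * p + 3 * q := by ring
    have h3' : 3 * j ≡ 3 * q [MOD m] := Nat.ModEq.add_left_cancel' (2 * p) h2'
    have : j ≡ q [MOD m] := Nat.ModEq.cancel_left_of_coprime h3 h3'
    have hjq : j = q := modeq_eq_of_lt this hj' hq'
    exact hne' ⟨by omega, hjq⟩

/-- The first row is an `n`-clique, so `n ≤ χ(Q(n))`. -/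
lemma queens_lower (n : ℕ) (hn : 0 < n) :
    (n : ℕ∞) ≤ (queensGraph n).chromaticNumber := by
  classical
  have hclique : (queensGraph n).IsClique
      (↑(Finset.univ.image (fun j : Fin n => ((⟨0, hn⟩ : Fin n), j)))) := by
    intro u hu v hv huv
    simp only [Finset.coe_image, Finset.coe_univ, Set.image_univ, Set.mem_range] at hu hv
    obtain ⟨a, rfl⟩ := hu
    obtain ⟨b, rfl⟩ := hv
    exact ⟨huv, Or.inl rfl⟩
  have hcard : (Finset.univ.image (fun j : Fin n => ((⟨0, hn⟩ : Fin n), j))).card = n := by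
    rw [Finset.card_image_of_injective _ (fun a b h => congrArg Prod.snd h)]
    simp
  have := hclique.card_le_chromaticNumber
  rwa [hcard] at this

/-- for `n ≥ 5`, `n ≤ χ(Q(n))`; moreover `χ(Q(n)) = n` if
`n ≡ 1, 5 (mod 6)` and `χ(Q(n)) ≤ n + 3` otherwise. -/
theorem queens_chromatic_bounds (n : ℕ) (hn : 5 ≤ n) :
    (n : ℕ∞) ≤ (queensGraph n).chromaticNumber ∧
      ((n % 6 = 1 ∨ n % 6 = 5) → (queensGraph n).chromaticNumber = n) ∧
      (¬ (n % 6 = 1 ∨ n % 6 = 5) → (queensGraph n).chromaticNumber ≤ (n : ℕ∞) + 3) := by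
  have hn0 : 0 < n := by omega
  refine ⟨queens_lower n hn0, ?_, ?_⟩
  · intro h
    have hcol : (queensGraph n).Colorable n :=
      queens_colorable n n hn0 le_rfl (by omega) (by omega)
    exact le_antisymm hcol.chromaticNumber_le (queens_lower n hn0)
  · intro h
    have hex : ∃ k, k ≤ 3 ∧ ¬ 2 ∣ (n + k) ∧ ¬ 3 ∣ (n + k) := by
      rcases (by omega : n % 6 = 0 ∨ n % 6 = 2 ∨ n % 6 = 3 ∨ n % 6 = 4) with h6 | h6 | h6 | h6
      · exact ⟨1, by omega, by omega, by omega⟩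
      · exact ⟨3, by omega, by omega, by omega⟩
      · exact ⟨2, by omega, by omega, by omega⟩
      · exact ⟨1, by omega, by omega, by omega⟩
    obtain ⟨k, hk3, hg2, hg3⟩ := hex
    have hcol : (queensGraph n).Colorable (n + k) :=
      queens_colorable n (n + k) (by omega) (by omega) hg2 hg3
    calc (queensGraph n).chromaticNumber ≤ ((n + k : ℕ) : ℕ∞) := hcol.chromaticNumber_le
      _ ≤ (n : ℕ∞) + 3 := by
          push_cast
          exact add_le_add le_rfl (by exact_mod_cast hk3)
end

section
/- For every natural number n ≥ 1, every real eigenvalue μ of the adjacency matrix of the n-Queens' graph Q(n) satisfies μ ≥ −4. -/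
lemma quad_nonneg {V ι : Type*} [Fintype V] [DecidableEq ι] (f : V → ι) (x : V → ℝ) :
    0 ≤ ∑ u, ∑ v, (if f u = f v then x u * x v else 0) := by
  have key : ∀ u v : V, (if f u = f v then x u * x v else 0) =
      ∑ k ∈ Finset.univ.image f, (if f u = k then x u else 0) * (if f v = k then x v else 0) := by
    intro u v
    rw [Finset.sum_eq_single (f u)]
    · by_cases h : f u = f v
      · simp [h]
      · rw [if_neg h, if_neg (show ¬ f v = f u from fun hh => h hh.symm), mul_zero]
    · intro b _ hb
      rw [if_neg (fun h => hb h.symm), zero_mul]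
    · intro h
      exact absurd (Finset.mem_image_of_mem f (Finset.mem_univ u)) h
  simp_rw [key]
  have swap : ∑ u : V, ∑ v : V, ∑ k ∈ Finset.univ.image f,
      (if f u = k then x u else 0) * (if f v = k then x v else 0)
      = ∑ k ∈ Finset.univ.image f, (∑ u : V, if f u = k then x u else 0) ^ 2 := by
    calc ∑ u : V, ∑ v : V, ∑ k ∈ Finset.univ.image f,
        (if f u = k then x u else 0) * (if f v = k then x v else 0)
        = ∑ u : V, ∑ k ∈ Finset.univ.image f, ∑ v : V,
          (if f u = k then x u else 0) * (if f v = k then x v else 0) :=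
        Finset.sum_congr rfl fun u _ => Finset.sum_comm
      _ = ∑ k ∈ Finset.univ.image f, ∑ u : V, ∑ v : V,
          (if f u = k then x u else 0) * (if f v = k then x v else 0) :=
        Finset.sum_comm
      _ = ∑ k ∈ Finset.univ.image f, (∑ u : V, if f u = k then x u else 0) ^ 2 := by
        refine Finset.sum_congr rfl fun k _ => ?_
        rw [sq, Finset.sum_mul_sum]
  rw [swap]
  exact Finset.sum_nonneg fun k _ => sq_nonneg _


lemma queens_entry (n : ℕ) (u v : Fin n × Fin n) :
    ((queensGraph n).adjMatrix ℝ) u v =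
      (if u.1 = v.1 then (1:ℝ) else 0) + (if u.2 = v.2 then 1 else 0)
      + (if u.1.val + u.2.val = v.1.val + v.2.val then 1 else 0)
      + (if u.1.val + v.2.val = v.1.val + u.2.val then 1 else 0)
      - 4 * (if u = v then 1 else 0) := by
  by_cases h : u = v
  · subst h
    simp [SimpleGraph.adjMatrix_apply]
    norm_num
  · have hv : ¬(u.1.val = v.1.val ∧ u.2.val = v.2.val) := fun hc =>
      h (Prod.ext_iff.mpr ⟨Fin.val_injective hc.1, Fin.val_injective hc.2⟩)
    rw [SimpleGraph.adjMatrix_apply, if_neg h, mul_zero, sub_zero]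
    have hAdj : (queensGraph n).Adj u v ↔ (u.1.val = v.1.val ∨ u.2.val = v.2.val ∨
        u.1.val + u.2.val = v.1.val + v.2.val ∨ u.1.val + v.2.val = v.1.val + u.2.val) := by
      constructor
      · rintro ⟨-, hd⟩
        simp only [← Fin.val_inj] at hd
        exact hd
      · intro hd
        refine ⟨h, ?_⟩
        simp only [← Fin.val_inj]
        exact hd
    simp only [hAdj]
    simp only [← Fin.val_inj]
    split_ifs <;> first | (exfalso; omega) | norm_num


/-- every real eigenvalue of the adjacency matrix of `Q(n)` is at
least `-4`. -/
theorem queens_eigenvalue_ge_neg_four (n : ℕ) (hn : 1 ≤ n) (μ : ℝ)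
    (x : Fin n × Fin n → ℝ) (hx : x ≠ 0)
    (hμ : ((queensGraph n).adjMatrix ℝ).mulVec x = μ • x) :
    -4 ≤ μ := by
  set A := (queensGraph n).adjMatrix ℝ with hA
  set T := ∑ u, x u ^ 2 with hTdef
  -- T > 0
  obtain ⟨u₀, hu₀⟩ : ∃ u, x u ≠ 0 := Function.ne_iff.mp hx
  have hT : 0 < T := by
    have h1 : x u₀ ^ 2 ≤ T :=
      Finset.single_le_sum (f := fun u => x u ^ 2) (fun i _ => sq_nonneg (x i))
        (Finset.mem_univ u₀)
    have h2 : 0 < x u₀ ^ 2 := by positivity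
    linarith
  -- the quadratic form equals μ * T
  have hS : ∑ u, ∑ v, A u v * (x u * x v) = μ * T := by
    have h1 : ∀ u, ∑ v, A u v * x v = μ * x u := by
      intro u
      have := congrFun hμ u
      simpa [Matrix.mulVec, dotProduct] using this
    calc ∑ u, ∑ v, A u v * (x u * x v) = ∑ u, x u * ∑ v, A u v * x v := by
          refine Finset.sum_congr rfl fun u _ => ?_
          rw [Finset.mul_sum]
          exact Finset.sum_congr rfl fun v _ => by ring
      _ = ∑ u, x u * (μ * x u) := by
          refine Finset.sum_congr rfl fun u _ => ?_
          rw [h1 u]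
      _ = μ * T := by
          rw [hTdef, Finset.mul_sum]
          exact Finset.sum_congr rfl fun u _ => by ring
  -- diagonal sum
  have hdiag : ∑ u : Fin n × Fin n, ∑ v : Fin n × Fin n,
      (if u = v then x u * x v else 0) = T := by
    rw [hTdef]
    refine Finset.sum_congr rfl fun u _ => ?_
    rw [Finset.sum_ite_eq]
    simp [sq]
  -- pointwise decomposition
  have hpt : ∀ u v : Fin n × Fin n, A u v * (x u * x v) =
      (if u.1 = v.1 then x u * x v else 0) + (if u.2 = v.2 then x u * x v else 0)
      + (if u.1.val + u.2.val = v.1.val + v.2.val then x u * x v else 0)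
      + (if u.1.val + v.2.val = v.1.val + u.2.val then x u * x v else 0)
      - 4 * (if u = v then x u * x v else 0) := by
    intro u v
    rw [hA, queens_entry]
    split_ifs <;> ring
  -- split the double sum
  have hsplit : ∑ u, ∑ v, A u v * (x u * x v) =
      (∑ u, ∑ v, if u.1 = v.1 then x u * x v else 0)
      + (∑ u, ∑ v, if u.2 = v.2 then x u * x v else 0)
      + (∑ u, ∑ v, if u.1.val + u.2.val = v.1.val + v.2.val then x u * x v else 0)
      + (∑ u, ∑ v, if u.1.val + v.2.val = v.1.val + u.2.val then x u * x v else 0)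
      - 4 * T := by
    rw [← hdiag]
    simp_rw [hpt]
    simp only [Finset.sum_add_distrib, Finset.sum_sub_distrib, Finset.mul_sum]
  -- nonnegativity of the four quadratic forms
  have hQ1 : 0 ≤ ∑ u, ∑ v, (if u.1 = v.1 then x u * x v else 0) :=
    quad_nonneg (fun u : Fin n × Fin n => u.1) x
  have hQ2 : 0 ≤ ∑ u, ∑ v, (if u.2 = v.2 then x u * x v else 0) :=
    quad_nonneg (fun u : Fin n × Fin n => u.2) x
  have hQ3 : 0 ≤ ∑ u, ∑ v, (if u.1.val + u.2.val = v.1.val + v.2.val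
      then x u * x v else 0) :=
    quad_nonneg (fun u : Fin n × Fin n => u.1.val + u.2.val) x
  have hQ4 : 0 ≤ ∑ u, ∑ v, (if u.1.val + v.2.val = v.1.val + u.2.val
      then x u * x v else 0) := by
    have hiff : ∀ u v : Fin n × Fin n, (u.1.val + v.2.val = v.1.val + u.2.val) ↔
        ((u.1.val : ℤ) - u.2.val = (v.1.val : ℤ) - v.2.val) := by
      intro u v; omega
    simp_rw [hiff]
    exact quad_nonneg (fun u : Fin n × Fin n => (u.1.val : ℤ) - u.2.val) x
  have hineq : μ * T ≥ -4 * T := by rw [← hS, hsplit]; linarith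
  nlinarith [hT, hineq]
end

section
/- Let n ≥ 4 and index the vertices of the n-Queens' graph Q(n) by pairs (i,j) with 1 ≤ i,j ≤ n. A nonzero real vector X = (x_{(i,j)}) is an eigenvector of the adjacency matrix of Q(n) for the eigenvalue −4 if and only if all of the following hold: (a) for every k with 1 ≤ k ≤ n, Σ_{j=1}^n x_{(k,j)} = 0 and Σ_{i=1}^n x_{(i,k)} = 0; (b) for every k with 1 ≤ k ≤ 2n−3, Σ_{i+j = k+2} x_{(i,j)} = 0; (c) for every k with 1 ≤ k ≤ 2n−3, Σ_{i−j = k+1−n} x_{(i,j)} = 0; and (d) x_{(1,1)} = x_{(1,n)} = x_{(n,1)} = x_{(n,n)} = 0. Consequently, −4 is an eigenvalue of Q(n) if and only if such a nonzero vector exists. -/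
namespace QAux
variable {n : ℕ}

noncomputable def rowS (x : Fin n × Fin n → ℝ) (i : Fin n) : ℝ := ∑ j, x (i, j)
noncomputable def colS (x : Fin n × Fin n → ℝ) (j : Fin n) : ℝ := ∑ i, x (i, j)
noncomputable def diagS (x : Fin n × Fin n → ℝ) (s : ℕ) : ℝ :=
  ∑ p : Fin n × Fin n, if p.1.val + p.2.val = s then x p else 0
noncomputable def adiagS (x : Fin n × Fin n → ℝ) (t : ℤ) : ℝ :=
  ∑ p : Fin n × Fin n, if (p.1.val : ℤ) - (p.2.val : ℤ) = t then x p else 0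
noncomputable def TS (x : Fin n × Fin n → ℝ) (u : Fin n × Fin n) : ℝ :=
  rowS x u.1 + colS x u.2 + diagS x (u.1.val + u.2.val)
    + adiagS x ((u.1.val : ℤ) - (u.2.val : ℤ))

lemma rowS_eq (x : Fin n × Fin n → ℝ) (i : Fin n) :
    rowS x i = ∑ p : Fin n × Fin n, if p.1 = i then x p else 0 := by
  rw [rowS, Fintype.sum_prod_type]
  rw [show (∑ a : Fin n, ∑ b : Fin n, if a = i then x (a, b) else 0)
      = ∑ a : Fin n, if a = i then ∑ b, x (a, b) else 0 from
    Finset.sum_congr rfl fun a _ => by split_ifs <;> simp]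
  simp

lemma colS_eq (x : Fin n × Fin n → ℝ) (j : Fin n) :
    colS x j = ∑ p : Fin n × Fin n, if p.2 = j then x p else 0 := by
  rw [colS, Fintype.sum_prod_type_right]
  rw [show (∑ b : Fin n, ∑ a : Fin n, if b = j then x (a, b) else 0)
      = ∑ b : Fin n, if b = j then ∑ a, x (a, b) else 0 from
    Finset.sum_congr rfl fun b _ => by split_ifs <;> simp]
  simp

lemma coef (x : Fin n × Fin n → ℝ) (u p : Fin n × Fin n) :
    ((if p.1 = u.1 then x p else 0) + (if p.2 = u.2 then x p else 0)
      + (if p.1.val + p.2.val = u.1.val + u.2.val then x p else 0)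
      + (if (p.1.val : ℤ) - (p.2.val : ℤ) = (u.1.val : ℤ) - (u.2.val : ℤ) then x p else 0))
    = (if (queensGraph n).Adj u p then x p else 0) + (if p = u then 4 * x p else 0) := by
  rcases eq_or_ne p u with h | h
  · subst h
    simp [queensGraph]
    ring
  · have h' : ¬(p.1.val = u.1.val ∧ p.2.val = u.2.val) := by
      rintro ⟨h1, h2⟩
      exact h (Prod.ext (Fin.ext h1) (Fin.ext h2))
    rw [if_neg h]
    have hadj : (queensGraph n).Adj u p ↔ (u.1.val = p.1.val ∨ u.2.val = p.2.val ∨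
        u.1.val + u.2.val = p.1.val + p.2.val ∨ u.1.val + p.2.val = p.1.val + u.2.val) := by
      constructor
      · rintro ⟨-, h2⟩; simpa [Fin.ext_iff] using h2
      · intro h2; exact ⟨Ne.symm h, by simpa [Fin.ext_iff] using h2⟩
    simp only [hadj, Fin.ext_iff]
    split_ifs <;> (try (exfalso; omega)) <;> ring

lemma key1 (x : Fin n × Fin n → ℝ) (u : Fin n × Fin n) :
    ((queensGraph n).adjMatrix ℝ).mulVec x u + 4 * x u = TS x u := by
  have h1 : ((queensGraph n).adjMatrix ℝ).mulVec x u
      = ∑ p : Fin n × Fin n, if (queensGraph n).Adj u p then x p else 0 := by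
    simp [Matrix.mulVec, dotProduct, SimpleGraph.adjMatrix_apply, ite_mul]
  have h2 : 4 * x u = ∑ p : Fin n × Fin n, if p = u then 4 * x p else 0 := by
    simp [Finset.sum_ite_eq']
  rw [h1, h2, ← Finset.sum_add_distrib]
  rw [TS, rowS_eq, colS_eq, diagS, adiagS, ← Finset.sum_add_distrib,
    ← Finset.sum_add_distrib, ← Finset.sum_add_distrib]
  exact Finset.sum_congr rfl fun p _ => (coef x u p).symm

lemma eig_iff (x : Fin n × Fin n → ℝ) :
    ((queensGraph n).adjMatrix ℝ).mulVec x = (-4 : ℝ) • x ↔ ∀ u, TS x u = 0 := by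
  rw [funext_iff]
  refine forall_congr' fun u => ?_
  rw [← key1 x u, Pi.smul_apply, smul_eq_mul]
  constructor <;> intro h <;> linarith

end QAux
namespace QAux
variable {n : ℕ}

lemma sum_mul_TS (x : Fin n × Fin n → ℝ) :
    ∑ u : Fin n × Fin n, x u * TS x u
      = (∑ i, rowS x i * rowS x i) + (∑ j, colS x j * colS x j)
        + (∑ s ∈ Finset.range (2 * n - 1), diagS x s * diagS x s)
        + (∑ t ∈ Finset.Icc (1 - (n : ℤ)) ((n : ℤ) - 1), adiagS x t * adiagS x t) := by
  have hA : ∑ u : Fin n × Fin n, x u * rowS x u.1 = ∑ i, rowS x i * rowS x i := by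
    rw [Fintype.sum_prod_type]
    refine Finset.sum_congr rfl fun i _ => ?_
    show (∑ y : Fin n, x (i, y) * rowS x i) = _
    rw [← Finset.sum_mul]; rfl
  have hB : ∑ u : Fin n × Fin n, x u * colS x u.2 = ∑ j, colS x j * colS x j := by
    rw [Fintype.sum_prod_type_right]
    refine Finset.sum_congr rfl fun j _ => ?_
    show (∑ a : Fin n, x (a, j) * colS x j) = _
    rw [← Finset.sum_mul]; rfl
  have hC : ∑ u : Fin n × Fin n, x u * diagS x (u.1.val + u.2.val)
      = ∑ s ∈ Finset.range (2 * n - 1), diagS x s * diagS x s := by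
    rw [← Finset.sum_fiberwise_of_maps_to (g := fun u : Fin n × Fin n => u.1.val + u.2.val)
      (t := Finset.range (2 * n - 1))
      (fun u _ => by have := u.1.isLt; have := u.2.isLt; simp [Finset.mem_range]; omega)]
    refine Finset.sum_congr rfl fun s _ => ?_
    have : ∑ u ∈ Finset.univ.filter (fun u : Fin n × Fin n => u.1.val + u.2.val = s),
        x u * diagS x (u.1.val + u.2.val)
        = ∑ u ∈ Finset.univ.filter (fun u : Fin n × Fin n => u.1.val + u.2.val = s),
        x u * diagS x s := by
      refine Finset.sum_congr rfl fun u hu => ?_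
      rw [Finset.mem_filter] at hu
      rw [hu.2]
    rw [this, ← Finset.sum_mul]
    congr 1
    rw [diagS, ← Finset.sum_filter]
  have hD : ∑ u : Fin n × Fin n, x u * adiagS x ((u.1.val : ℤ) - u.2.val)
      = ∑ t ∈ Finset.Icc (1 - (n : ℤ)) ((n : ℤ) - 1), adiagS x t * adiagS x t := by
    rw [← Finset.sum_fiberwise_of_maps_to
      (g := fun u : Fin n × Fin n => (u.1.val : ℤ) - u.2.val)
      (t := Finset.Icc (1 - (n : ℤ)) ((n : ℤ) - 1))
      (fun u _ => by have := u.1.isLt; have := u.2.isLt; simp [Finset.mem_Icc]; omega)]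
    refine Finset.sum_congr rfl fun t _ => ?_
    have : ∑ u ∈ Finset.univ.filter
        (fun u : Fin n × Fin n => (u.1.val : ℤ) - u.2.val = t),
        x u * adiagS x ((u.1.val : ℤ) - u.2.val)
        = ∑ u ∈ Finset.univ.filter
        (fun u : Fin n × Fin n => (u.1.val : ℤ) - u.2.val = t),
        x u * adiagS x t := by
      refine Finset.sum_congr rfl fun u hu => ?_
      rw [Finset.mem_filter] at hu
      rw [hu.2]
    rw [this, ← Finset.sum_mul]
    congr 1
    rw [adiagS, ← Finset.sum_filter]
  calc ∑ u : Fin n × Fin n, x u * TS x u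
      = (∑ u : Fin n × Fin n, x u * rowS x u.1)
        + (∑ u : Fin n × Fin n, x u * colS x u.2)
        + (∑ u : Fin n × Fin n, x u * diagS x (u.1.val + u.2.val))
        + (∑ u : Fin n × Fin n, x u * adiagS x ((u.1.val : ℤ) - u.2.val)) := by
        rw [← Finset.sum_add_distrib, ← Finset.sum_add_distrib, ← Finset.sum_add_distrib]
        exact Finset.sum_congr rfl fun u _ => by rw [TS]; ring
    _ = _ := by rw [hA, hB, hC, hD]

lemma allzero_of (x : Fin n × Fin n → ℝ) (h : ∀ u, TS x u = 0) :
    (∀ i, rowS x i = 0) ∧ (∀ j, colS x j = 0)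
      ∧ (∀ s ∈ Finset.range (2 * n - 1), diagS x s = 0)
      ∧ (∀ t ∈ Finset.Icc (1 - (n : ℤ)) ((n : ℤ) - 1), adiagS x t = 0) := by
  have h0 : (∑ i, rowS x i * rowS x i) + (∑ j, colS x j * colS x j)
      + (∑ s ∈ Finset.range (2 * n - 1), diagS x s * diagS x s)
      + (∑ t ∈ Finset.Icc (1 - (n : ℤ)) ((n : ℤ) - 1), adiagS x t * adiagS x t) = 0 := by
    rw [← sum_mul_TS]
    simp [h]
  have nA : ∀ i ∈ (Finset.univ : Finset (Fin n)), 0 ≤ rowS x i * rowS x i :=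
    fun i _ => mul_self_nonneg _
  have nB : ∀ j ∈ (Finset.univ : Finset (Fin n)), 0 ≤ colS x j * colS x j :=
    fun j _ => mul_self_nonneg _
  have nC : ∀ s ∈ Finset.range (2 * n - 1), 0 ≤ diagS x s * diagS x s :=
    fun s _ => mul_self_nonneg _
  have nD : ∀ t ∈ Finset.Icc (1 - (n : ℤ)) ((n : ℤ) - 1), 0 ≤ adiagS x t * adiagS x t :=
    fun t _ => mul_self_nonneg _
  have pA := Finset.sum_nonneg nA
  have pB := Finset.sum_nonneg nB
  have pC := Finset.sum_nonneg nC
  have pD := Finset.sum_nonneg nD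
  refine ⟨fun i => ?_, fun j => ?_, fun s hs => ?_, fun t ht => ?_⟩
  · have := (Finset.sum_eq_zero_iff_of_nonneg nA).mp (by linarith) i (Finset.mem_univ i)
    exact mul_self_eq_zero.mp this
  · have := (Finset.sum_eq_zero_iff_of_nonneg nB).mp (by linarith) j (Finset.mem_univ j)
    exact mul_self_eq_zero.mp this
  · have := (Finset.sum_eq_zero_iff_of_nonneg nC).mp (by linarith) s hs
    exact mul_self_eq_zero.mp this
  · have := (Finset.sum_eq_zero_iff_of_nonneg nD).mp (by linarith) t ht
    exact mul_self_eq_zero.mp this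

end QAux
namespace QAux
variable {n : ℕ}

lemma diag_zero (hn : 0 < n) (x : Fin n × Fin n → ℝ) :
    diagS x 0 = x (⟨0, hn⟩, ⟨0, hn⟩) := by
  rw [diagS, Finset.sum_eq_single_of_mem (⟨0, hn⟩, ⟨0, hn⟩) (Finset.mem_univ _)]
  · simp
  · intro p _ hne
    rw [if_neg]
    intro hc
    exact hne (Prod.ext (Fin.ext (show p.1.val = 0 by omega))
      (Fin.ext (show p.2.val = 0 by omega)))

lemma diag_max (hn : 0 < n) (x : Fin n × Fin n → ℝ) :
    diagS x (2 * n - 2) = x (⟨n - 1, by omega⟩, ⟨n - 1, by omega⟩) := by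
  rw [diagS, Finset.sum_eq_single_of_mem (⟨n - 1, by omega⟩, ⟨n - 1, by omega⟩)
    (Finset.mem_univ _)]
  · rw [if_pos]; show n - 1 + (n - 1) = 2 * n - 2; omega
  · intro p _ hne
    rw [if_neg]
    intro hc
    have h1 := p.1.isLt
    have h2 := p.2.isLt
    exact hne (Prod.ext (Fin.ext (show p.1.val = n - 1 by omega))
      (Fin.ext (show p.2.val = n - 1 by omega)))

lemma adiag_max (hn : 0 < n) (x : Fin n × Fin n → ℝ) :
    adiagS x ((n : ℤ) - 1) = x (⟨n - 1, by omega⟩, ⟨0, hn⟩) := by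
  rw [adiagS, Finset.sum_eq_single_of_mem (⟨n - 1, by omega⟩, ⟨0, hn⟩)
    (Finset.mem_univ _)]
  · rw [if_pos]; show ((n - 1 : ℕ) : ℤ) - ((0 : ℕ) : ℤ) = (n : ℤ) - 1; omega
  · intro p _ hne
    rw [if_neg]
    intro hc
    have h1 := p.1.isLt
    have h2 := p.2.isLt
    exact hne (Prod.ext (Fin.ext (show p.1.val = n - 1 by omega))
      (Fin.ext (show p.2.val = 0 by omega)))

lemma adiag_min (hn : 0 < n) (x : Fin n × Fin n → ℝ) :
    adiagS x (1 - (n : ℤ)) = x (⟨0, hn⟩, ⟨n - 1, by omega⟩) := by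
  rw [adiagS, Finset.sum_eq_single_of_mem (⟨0, hn⟩, ⟨n - 1, by omega⟩)
    (Finset.mem_univ _)]
  · rw [if_pos]; show ((0 : ℕ) : ℤ) - ((n - 1 : ℕ) : ℤ) = 1 - (n : ℤ); omega
  · intro p _ hne
    rw [if_neg]
    intro hc
    have h1 := p.1.isLt
    have h2 := p.2.isLt
    exact hne (Prod.ext (Fin.ext (show p.1.val = 0 by omega))
      (Fin.ext (show p.2.val = n - 1 by omega)))

end QAux
theorem aux_main (n : ℕ) (hn : 4 ≤ n) (x : Fin n × Fin n → ℝ) :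
    ((queensGraph n).adjMatrix ℝ).mulVec x = (-4 : ℝ) • x ↔
      ((∀ k : Fin n, (∑ j : Fin n, x (k, j)) = 0 ∧ (∑ i : Fin n, x (i, k)) = 0) ∧
        (∀ k : ℕ, 1 ≤ k → k ≤ 2 * n - 3 →
          (∑ p : Fin n × Fin n, if p.1.val + p.2.val = k then x p else 0) = 0) ∧
        (∀ k : ℕ, 1 ≤ k → k ≤ 2 * n - 3 →
          (∑ p : Fin n × Fin n,
            if (p.1.val : ℤ) - (p.2.val : ℤ) = (k : ℤ) + 1 - (n : ℤ) then x p else 0) = 0) ∧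
        (x (⟨0, by have := hn; omega⟩, ⟨0, by have := hn; omega⟩) = 0 ∧ x (⟨0, by have := hn; omega⟩, ⟨n - 1, by have := hn; omega⟩) = 0 ∧
          x (⟨n - 1, by have := hn; omega⟩, ⟨0, by have := hn; omega⟩) = 0 ∧
          x (⟨n - 1, by have := hn; omega⟩, ⟨n - 1, by have := hn; omega⟩) = 0)) := by
  have hn0 : 0 < n := by omega
  rw [QAux.eig_iff]
  constructor
  · intro h
    obtain ⟨hr, hc, hd, ha⟩ := QAux.allzero_of x h
    refine ⟨fun k => ⟨hr k, hc k⟩, fun k hk1 hk2 => ?_, fun k hk1 hk2 => ?_, ?_, ?_, ?_, ?_⟩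
    · exact hd k (by simp only [Finset.mem_range]; omega)
    · exact ha _ (by simp only [Finset.mem_Icc]; omega)
    · have := hd 0 (by simp only [Finset.mem_range]; omega)
      rw [QAux.diag_zero hn0 x] at this
      exact this
    · have := ha (1 - (n : ℤ)) (by simp only [Finset.mem_Icc]; omega)
      rw [QAux.adiag_min hn0 x] at this
      exact this
    · have := ha ((n : ℤ) - 1) (by simp only [Finset.mem_Icc]; omega)
      rw [QAux.adiag_max hn0 x] at this
      exact this
    · have := hd (2 * n - 2) (by simp only [Finset.mem_range]; omega)
      rw [QAux.diag_max hn0 x] at this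
      exact this
  · rintro ⟨ha, hb, hc, h00, h0n, hn0', hnn⟩ u
    have hlt1 := u.1.isLt
    have hlt2 := u.2.isLt
    have hrow : QAux.rowS x u.1 = 0 := (ha u.1).1
    have hcol : QAux.colS x u.2 = 0 := (ha u.2).2
    have hdiag : QAux.diagS x (u.1.val + u.2.val) = 0 := by
      by_cases h1 : u.1.val + u.2.val = 0
      · rw [h1, QAux.diag_zero hn0]; exact h00
      · by_cases h2 : u.1.val + u.2.val ≤ 2 * n - 3
        · exact hb _ (by omega) h2
        · have he : u.1.val + u.2.val = 2 * n - 2 := by omega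
          rw [he, QAux.diag_max hn0]; exact hnn
    have hadiag : QAux.adiagS x ((u.1.val : ℤ) - u.2.val) = 0 := by
      by_cases h1 : (u.1.val : ℤ) - u.2.val = 1 - (n : ℤ)
      · rw [h1, QAux.adiag_min hn0]; exact h0n
      · by_cases h2 : (u.1.val : ℤ) - u.2.val = (n : ℤ) - 1
        · rw [h2, QAux.adiag_max hn0]; exact hn0'
        · obtain ⟨k, hk1, hk2, hk3⟩ : ∃ k : ℕ, 1 ≤ k ∧ k ≤ 2 * n - 3 ∧
              (k : ℤ) + 1 - (n : ℤ) = (u.1.val : ℤ) - u.2.val :=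
            ⟨((u.1.val : ℤ) - u.2.val + n - 1).toNat, by omega, by omega, by omega⟩
          rw [← hk3]
          exact hc k hk1 hk2
    rw [QAux.TS, hrow, hcol, hdiag, hadiag]
    ring


/-- for `n ≥ 4`, a nonzero vector `X` is an eigenvector of the
adjacency matrix of `Q(n)` for `-4` iff all row sums, column sums, the sums over
the `2n-3` diagonals of each direction having at least two squares, vanish and
`X` is zero on the four corners.  (Coordinates are `0`-based: square `(i,j)`,
`0 ≤ i,j ≤ n-1`, corresponds to the `1`-based square `(i+1, j+1)`.)
Consequently, `-4` is an eigenvalue of `Q(n)` iff such a nonzero vector exists. -/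
theorem queens_neg_four_eigenvector_iff (n : ℕ) (hn : 4 ≤ n) :
    (∀ x : Fin n × Fin n → ℝ, x ≠ 0 →
      (((queensGraph n).adjMatrix ℝ).mulVec x = (-4 : ℝ) • x ↔
        ((∀ k : Fin n, (∑ j : Fin n, x (k, j)) = 0 ∧ (∑ i : Fin n, x (i, k)) = 0) ∧
          (∀ k : ℕ, 1 ≤ k → k ≤ 2 * n - 3 →
            (∑ p : Fin n × Fin n, if p.1.val + p.2.val = k then x p else 0) = 0) ∧
          (∀ k : ℕ, 1 ≤ k → k ≤ 2 * n - 3 →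
            (∑ p : Fin n × Fin n,
              if (p.1.val : ℤ) - (p.2.val : ℤ) = (k : ℤ) + 1 - (n : ℤ) then x p else 0) = 0) ∧
          (x (⟨0, by omega⟩, ⟨0, by omega⟩) = 0 ∧ x (⟨0, by omega⟩, ⟨n - 1, by omega⟩) = 0 ∧
            x (⟨n - 1, by omega⟩, ⟨0, by omega⟩) = 0 ∧
            x (⟨n - 1, by omega⟩, ⟨n - 1, by omega⟩) = 0)))) ∧
    ((∃ x : Fin n × Fin n → ℝ, x ≠ 0 ∧
        ((queensGraph n).adjMatrix ℝ).mulVec x = (-4 : ℝ) • x) ↔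
      (∃ x : Fin n × Fin n → ℝ, x ≠ 0 ∧
        (∀ k : Fin n, (∑ j : Fin n, x (k, j)) = 0 ∧ (∑ i : Fin n, x (i, k)) = 0) ∧
        (∀ k : ℕ, 1 ≤ k → k ≤ 2 * n - 3 →
          (∑ p : Fin n × Fin n, if p.1.val + p.2.val = k then x p else 0) = 0) ∧
        (∀ k : ℕ, 1 ≤ k → k ≤ 2 * n - 3 →
          (∑ p : Fin n × Fin n,
            if (p.1.val : ℤ) - (p.2.val : ℤ) = (k : ℤ) + 1 - (n : ℤ) then x p else 0) = 0) ∧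
        (x (⟨0, by omega⟩, ⟨0, by omega⟩) = 0 ∧ x (⟨0, by omega⟩, ⟨n - 1, by omega⟩) = 0 ∧
          x (⟨n - 1, by omega⟩, ⟨0, by omega⟩) = 0 ∧
          x (⟨n - 1, by omega⟩, ⟨n - 1, by omega⟩) = 0))) := by
  refine ⟨fun x _ => aux_main n hn x, ?_, ?_⟩
  · rintro ⟨x, hx, h⟩
    exact ⟨x, hx, (aux_main n hn x).mp h⟩
  · rintro ⟨x, hx, h⟩
    exact ⟨x, hx, (aux_main n hn x).mpr h⟩
end

section
/- For every n ≥ 3, the largest real eigenvalue μ₁ of the adjacency matrix of the n-Queens' graph Q(n) satisfies 2(n−1)(5n−1)/(3n) ≤ μ₁, and μ₁ ≤ 4n−5 if n is even, while μ₁ ≤ 4n−4 if n is odd. -/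
/-! ### Auxiliary counting lemmas -/

/-- Number of squares on the diagonal `p + a = b + q`. -/
lemma queens_card_line (n a b : ℕ) :
    ((Finset.univ : Finset (Fin n × Fin n)).filter
      (fun w => (w.1 : ℕ) + a = b + (w.2 : ℕ))).card
      = min n (b + n - a) - (b - a) := by
  rw [Finset.card_filter, Fintype.sum_prod_type]
  have hinner : ∀ p : Fin n, (∑ q : Fin n, if ((p : ℕ) + a = b + (q : ℕ)) then (1:ℕ) else 0)
      = if (b ≤ (p:ℕ) + a ∧ (p:ℕ) + a < b + n) then 1 else 0 := by
    intro p
    rw [Fin.sum_univ_eq_sum_range (fun q => if ((p:ℕ) + a = b + q) then (1:ℕ) else 0),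
      ← Finset.card_filter]
    by_cases h : b ≤ (p:ℕ) + a ∧ (p:ℕ) + a < b + n
    · rw [if_pos h]
      have : (Finset.range n).filter (fun q => (p:ℕ) + a = b + q) = {(p:ℕ) + a - b} := by
        ext q; simp only [Finset.mem_filter, Finset.mem_range, Finset.mem_singleton]; omega
      rw [this, Finset.card_singleton]
    · rw [if_neg h]
      have : (Finset.range n).filter (fun q => (p:ℕ) + a = b + q) = ∅ := by
        ext q; simp only [Finset.mem_filter, Finset.mem_range, Finset.notMem_empty, iff_false]
        omega
      rw [this, Finset.card_empty]
  rw [Finset.sum_congr rfl (fun p _ => hinner p)]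
  rw [Fin.sum_univ_eq_sum_range (fun p => if (b ≤ p + a ∧ p + a < b + n) then (1:ℕ) else 0),
    ← Finset.card_filter]
  have : (Finset.range n).filter (fun p => b ≤ p + a ∧ p + a < b + n)
      = Finset.Ico (b - a) (min n (b + n - a)) := by
    ext p; simp only [Finset.mem_filter, Finset.mem_range, Finset.mem_Ico]; omega
  rw [this, Nat.card_Ico]

/-- Number of squares on the antidiagonal `p + q = s`. -/
lemma queens_card_anti (n s : ℕ) :
    ((Finset.univ : Finset (Fin n × Fin n)).filter
      (fun w => (w.1 : ℕ) + (w.2 : ℕ) = s)).card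
      = min n (s + 1) - (s + 1 - n) := by
  rw [Finset.card_filter, Fintype.sum_prod_type]
  have hinner : ∀ p : Fin n, (∑ q : Fin n, if ((p : ℕ) + (q:ℕ) = s) then (1:ℕ) else 0)
      = if ((p:ℕ) ≤ s ∧ s < (p:ℕ) + n) then 1 else 0 := by
    intro p
    rw [Fin.sum_univ_eq_sum_range (fun q => if ((p:ℕ) + q = s) then (1:ℕ) else 0),
      ← Finset.card_filter]
    by_cases h : (p:ℕ) ≤ s ∧ s < (p:ℕ) + n
    · rw [if_pos h]
      have : (Finset.range n).filter (fun q => (p:ℕ) + q = s) = {s - (p:ℕ)} := by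
        ext q; simp only [Finset.mem_filter, Finset.mem_range, Finset.mem_singleton]; omega
      rw [this, Finset.card_singleton]
    · rw [if_neg h]
      have : (Finset.range n).filter (fun q => (p:ℕ) + q = s) = ∅ := by
        ext q; simp only [Finset.mem_filter, Finset.mem_range, Finset.notMem_empty, iff_false]
        omega
      rw [this, Finset.card_empty]
  rw [Finset.sum_congr rfl (fun p _ => hinner p)]
  rw [Fin.sum_univ_eq_sum_range (fun p => if (p ≤ s ∧ s < p + n) then (1:ℕ) else 0),
    ← Finset.card_filter]
  have : (Finset.range n).filter (fun p => p ≤ s ∧ s < p + n)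
      = Finset.Ico (s + 1 - n) (min n (s + 1)) := by
    ext p; simp only [Finset.mem_filter, Finset.mem_range, Finset.mem_Ico]; omega
  rw [this, Nat.card_Ico]

/-- The degree of a square in the queens' graph, as a filter cardinality. -/
def qdeg (n : ℕ) (v : Fin n × Fin n) : ℕ :=
  ((Finset.univ : Finset (Fin n × Fin n)).filter (fun w => (queensGraph n).Adj v w)).card

lemma qdeg_eq (n : ℕ) (v : Fin n × Fin n) :
    qdeg n v + (((v.1:ℕ) + v.2 + 1 - n) + (n - 1 - ((v.1:ℕ) + v.2)))
      + (((v.1:ℕ) - v.2) + ((v.2:ℕ) - v.1)) = 4 * n - 4 := by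
  classical
  have hadj : ∀ w, (queensGraph n).Adj v w ↔ (v ≠ w ∧ (v.1 = w.1 ∨ v.2 = w.2 ∨
      (v.1:ℕ) + v.2 = (w.1:ℕ) + w.2 ∨ (v.1:ℕ) + w.2 = (w.1:ℕ) + v.2)) := fun w => Iff.rfl
  set F1 := (Finset.univ : Finset (Fin n × Fin n)).filter (fun w => w.1 = v.1) with hF1
  set F2 := (Finset.univ : Finset (Fin n × Fin n)).filter (fun w => w.2 = v.2) with hF2
  set F3 := (Finset.univ : Finset (Fin n × Fin n)).filter
      (fun w => (w.1:ℕ) + (w.2:ℕ) = (v.1:ℕ) + v.2) with hF3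
  set F4 := (Finset.univ : Finset (Fin n × Fin n)).filter
      (fun w => (w.1:ℕ) + (v.2:ℕ) = (v.1:ℕ) + (w.2:ℕ)) with hF4
  have hv1 : v ∈ F1 := by simp [hF1]
  have hv2 : v ∈ F2 := by simp [hF2]
  have hv3 : v ∈ F3 := by simp [hF3]
  have hv4 : v ∈ F4 := by simp [hF4]
  have key : (Finset.univ : Finset (Fin n × Fin n)).filter (fun w => (queensGraph n).Adj v w)
      = (F1.erase v) ∪ ((F2.erase v) ∪ ((F3.erase v) ∪ (F4.erase v))) := by
    ext w
    simp only [Finset.mem_filter, Finset.mem_union, Finset.mem_erase, Finset.mem_univ,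
      true_and, hadj, hF1, hF2, hF3, hF4]
    constructor
    · rintro ⟨hne, h⟩
      have hwv : w ≠ v := fun h' => hne h'.symm
      rcases h with h | h | h | h
      · exact Or.inl ⟨hwv, h.symm⟩
      · exact Or.inr (Or.inl ⟨hwv, h.symm⟩)
      · exact Or.inr (Or.inr (Or.inl ⟨hwv, h.symm⟩))
      · exact Or.inr (Or.inr (Or.inr ⟨hwv, by omega⟩))
    · rintro (⟨hwv, h⟩ | ⟨hwv, h⟩ | ⟨hwv, h⟩ | ⟨hwv, h⟩) <;>
      refine ⟨fun h' => hwv h'.symm, ?_⟩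
      · exact Or.inl h.symm
      · exact Or.inr (Or.inl h.symm)
      · exact Or.inr (Or.inr (Or.inl h.symm))
      · exact Or.inr (Or.inr (Or.inr (by omega)))
  have hcard1 : F1.card = n := by
    have : F1 = {v.1} ×ˢ (Finset.univ : Finset (Fin n)) := by
      ext w; simp only [hF1, Finset.mem_filter, Finset.mem_univ, true_and,
        Finset.mem_product, Finset.mem_singleton]
      tauto
    rw [this, Finset.card_product, Finset.card_singleton, Finset.card_univ, Fintype.card_fin,
      one_mul]
  have hcard2 : F2.card = n := by
    have : F2 = (Finset.univ : Finset (Fin n)) ×ˢ {v.2} := by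
      ext w; simp only [hF2, Finset.mem_filter, Finset.mem_univ, true_and,
        Finset.mem_product, Finset.mem_singleton]
    rw [this, Finset.card_product, Finset.card_singleton, Finset.card_univ, Fintype.card_fin,
      mul_one]
  have hcard3 : F3.card = min n ((v.1:ℕ) + v.2 + 1) - ((v.1:ℕ) + v.2 + 1 - n) :=
    queens_card_anti n _
  have hcard4 : F4.card = min n ((v.1:ℕ) + n - v.2) - ((v.1:ℕ) - v.2) :=
    queens_card_line n _ _
  have hd12 : Disjoint (F1.erase v) (F2.erase v) := by
    rw [Finset.disjoint_left]
    rintro w hw hw'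
    rw [Finset.mem_erase, hF1, Finset.mem_filter] at hw
    rw [Finset.mem_erase, hF2, Finset.mem_filter] at hw'
    exact hw.1 (Prod.ext hw.2.2 hw'.2.2)
  have hd13 : Disjoint (F1.erase v) (F3.erase v) := by
    rw [Finset.disjoint_left]
    rintro w hw hw'
    rw [Finset.mem_erase, hF1, Finset.mem_filter] at hw
    rw [Finset.mem_erase, hF3, Finset.mem_filter] at hw'
    have h1 : (w.1:ℕ) = v.1 := by rw [hw.2.2]
    exact hw.1 (Prod.ext hw.2.2 (Fin.val_injective (by omega)))
  have hd14 : Disjoint (F1.erase v) (F4.erase v) := by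
    rw [Finset.disjoint_left]
    rintro w hw hw'
    rw [Finset.mem_erase, hF1, Finset.mem_filter] at hw
    rw [Finset.mem_erase, hF4, Finset.mem_filter] at hw'
    have h1 : (w.1:ℕ) = v.1 := by rw [hw.2.2]
    exact hw.1 (Prod.ext hw.2.2 (Fin.val_injective (by omega)))
  have hd23 : Disjoint (F2.erase v) (F3.erase v) := by
    rw [Finset.disjoint_left]
    rintro w hw hw'
    rw [Finset.mem_erase, hF2, Finset.mem_filter] at hw
    rw [Finset.mem_erase, hF3, Finset.mem_filter] at hw'
    have h1 : (w.2:ℕ) = v.2 := by rw [hw.2.2]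
    exact hw.1 (Prod.ext (Fin.val_injective (by omega)) hw.2.2)
  have hd24 : Disjoint (F2.erase v) (F4.erase v) := by
    rw [Finset.disjoint_left]
    rintro w hw hw'
    rw [Finset.mem_erase, hF2, Finset.mem_filter] at hw
    rw [Finset.mem_erase, hF4, Finset.mem_filter] at hw'
    have h1 : (w.2:ℕ) = v.2 := by rw [hw.2.2]
    exact hw.1 (Prod.ext (Fin.val_injective (by omega)) hw.2.2)
  have hd34 : Disjoint (F3.erase v) (F4.erase v) := by
    rw [Finset.disjoint_left]
    rintro w hw hw'
    rw [Finset.mem_erase, hF3, Finset.mem_filter] at hw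
    rw [Finset.mem_erase, hF4, Finset.mem_filter] at hw'
    have h3 := hw.2.2
    have h4 := hw'.2.2
    exact hw.1 (Prod.ext (Fin.val_injective (by omega)) (Fin.val_injective (by omega)))
  have hcard : qdeg n v = (F1.erase v).card + ((F2.erase v).card
      + ((F3.erase v).card + (F4.erase v).card)) := by
    rw [qdeg, key, Finset.card_union_of_disjoint, Finset.card_union_of_disjoint,
      Finset.card_union_of_disjoint hd34]
    · exact Finset.disjoint_union_right.2 ⟨hd23, hd24⟩
    · exact Finset.disjoint_union_right.2 ⟨hd12, Finset.disjoint_union_right.2 ⟨hd13, hd14⟩⟩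
  rw [hcard, Finset.card_erase_of_mem hv1, Finset.card_erase_of_mem hv2,
    Finset.card_erase_of_mem hv3, Finset.card_erase_of_mem hv4,
    hcard1, hcard2, hcard3, hcard4]
  have hi : (v.1:ℕ) < n := v.1.isLt
  have hj : (v.2:ℕ) < n := v.2.isLt
  omega

/-! ### Summation lemmas -/

lemma queens_gauss_flip (n : ℕ) : 2 * (∑ i ∈ Finset.range n, (n - i)) = n * n + n := by
  have h1 : ∑ i ∈ Finset.range n, (n - i) = ∑ i ∈ Finset.range n, (i + 1) := by
    rw [← Finset.sum_range_reflect (fun j => n - j) n]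
    refine Finset.sum_congr rfl (fun j hj => ?_)
    rw [Finset.mem_range] at hj
    omega
  rw [h1, Finset.sum_add_distrib, Finset.sum_const, Finset.card_range, smul_eq_mul, mul_one]
  have hg := Finset.sum_range_id_mul_two n
  cases n with
  | zero => simp
  | succ m =>
    simp only [Nat.add_sub_cancel] at hg
    zify at hg ⊢
    linear_combination hg

lemma queens_sum_absdiff : ∀ n : ℕ,
    3 * (∑ i ∈ Finset.range n, ∑ j ∈ Finset.range n, ((i - j) + (j - i))) + n = n ^ 3 := by
  intro n
  induction n with
  | zero => simp
  | succ n ih =>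
    have hsplit : (∑ i ∈ Finset.range (n+1), ∑ j ∈ Finset.range (n+1), ((i - j) + (j - i)))
        = (∑ i ∈ Finset.range n, ∑ j ∈ Finset.range n, ((i - j) + (j - i)))
          + (∑ i ∈ Finset.range n, (n - i)) + (∑ j ∈ Finset.range n, (n - j)) := by
      rw [Finset.sum_range_succ]
      have hinner : ∀ i ∈ Finset.range n,
          (∑ j ∈ Finset.range (n+1), ((i - j) + (j - i)))
            = (∑ j ∈ Finset.range n, ((i - j) + (j - i))) + (n - i) := by
        intro i hi
        rw [Finset.mem_range] at hi
        rw [Finset.sum_range_succ]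
        omega
      rw [Finset.sum_congr rfl hinner, Finset.sum_add_distrib]
      have hlast : (∑ j ∈ Finset.range (n+1), ((n - j) + (j - n)))
          = ∑ j ∈ Finset.range n, (n - j) := by
        rw [Finset.sum_range_succ]
        have : ∀ j ∈ Finset.range n, (n - j) + (j - n) = n - j := by
          intro j hj; rw [Finset.mem_range] at hj; omega
        rw [Finset.sum_congr rfl this]
        simp
      rw [hlast]
    rw [hsplit]
    have hT := queens_gauss_flip n
    set S := ∑ i ∈ Finset.range n, ∑ j ∈ Finset.range n, ((i - j) + (j - i)) with hS
    set T := ∑ i ∈ Finset.range n, (n - i) with hT'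
    zify at ih hT ⊢
    linear_combination ih + 3 * hT

lemma queens_sum_board (n : ℕ) (F : ℕ → ℕ → ℕ) :
    (∑ v : Fin n × Fin n, F (v.1:ℕ) (v.2:ℕ))
      = ∑ i ∈ Finset.range n, ∑ j ∈ Finset.range n, F i j := by
  rw [Fintype.sum_prod_type]
  rw [← Fin.sum_univ_eq_sum_range (fun i => ∑ j ∈ Finset.range n, F i j) n]
  refine Finset.sum_congr rfl (fun a _ => ?_)
  exact Fin.sum_univ_eq_sum_range (fun j => F (a:ℕ) j) n

lemma queens_sum_reflect (n : ℕ) :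
    (∑ i ∈ Finset.range n, ∑ j ∈ Finset.range n, ((i + j + 1 - n) + (n - 1 - (i + j))))
      = ∑ i ∈ Finset.range n, ∑ j ∈ Finset.range n, ((i - j) + (j - i)) := by
  refine Finset.sum_congr rfl (fun i _ => ?_)
  rw [← Finset.sum_range_reflect (fun j => (i - j) + (j - i)) n]
  refine Finset.sum_congr rfl (fun j hj => ?_)
  rw [Finset.mem_range] at hj
  omega

lemma queens_sum_qdeg (n : ℕ) (hn : 1 ≤ n) :
    3 * (∑ v : Fin n × Fin n, qdeg n v) + 12 * n ^ 2 = 10 * n ^ 3 + 2 * n := by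
  classical
  have h1 : ∑ v : Fin n × Fin n, (qdeg n v
      + (((v.1:ℕ) + v.2 + 1 - n) + (n - 1 - ((v.1:ℕ) + v.2)))
      + (((v.1:ℕ) - v.2) + ((v.2:ℕ) - v.1)))
      = n * n * (4 * n - 4) := by
    rw [Finset.sum_congr rfl (fun v _ => qdeg_eq n v), Finset.sum_const, Finset.card_univ,
      Fintype.card_prod, Fintype.card_fin, smul_eq_mul]
  rw [Finset.sum_add_distrib, Finset.sum_add_distrib] at h1
  have hg : (∑ v : Fin n × Fin n, (((v.1:ℕ) + v.2 + 1 - n) + (n - 1 - ((v.1:ℕ) + v.2))))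
      = ∑ i ∈ Finset.range n, ∑ j ∈ Finset.range n, ((i - j) + (j - i)) := by
    rw [queens_sum_board n (fun i j => ((i + j + 1 - n) + (n - 1 - (i + j))))]
    exact queens_sum_reflect n
  have hf : (∑ v : Fin n × Fin n, (((v.1:ℕ) - v.2) + ((v.2:ℕ) - v.1)))
      = ∑ i ∈ Finset.range n, ∑ j ∈ Finset.range n, ((i - j) + (j - i)) :=
    queens_sum_board n (fun i j => ((i - j) + (j - i)))
  rw [hg, hf] at h1
  have hs := queens_sum_absdiff n
  have h4 : 4 ≤ 4 * n := by omega
  zify [h4] at h1 hs ⊢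
  linear_combination 3 * h1 - 2 * hs

/-- Any symmetric real matrix has an eigenvalue at least any Rayleigh quotient. -/
lemma exists_eig_ge_rayleigh {ι : Type*} [Fintype ι] [DecidableEq ι] [Nonempty ι]
    (A : Matrix ι ι ℝ) (hA : A.IsHermitian) (y : EuclideanSpace ℝ ι) (hy : y ≠ 0) :
    ∃ μ : ℝ, (∃ x : ι → ℝ, x ≠ 0 ∧ A.mulVec x = μ • x) ∧
      (inner ℝ ((Matrix.toEuclideanLin A) y) y : ℝ) / ‖y‖ ^ 2 ≤ μ := by
  classical
  haveI : Nontrivial (EuclideanSpace ℝ ι) := ⟨⟨y, 0, hy⟩⟩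
  set T := Matrix.toEuclideanLin A with hT
  have hsym : T.IsSymmetric := Matrix.isHermitian_iff_isSymmetric.1 hA
  have hev := hsym.hasEigenvalue_iSup_of_finiteDimensional
  set μ := (⨆ x : {x : EuclideanSpace ℝ ι // x ≠ 0},
      RCLike.re (inner ℝ (T x) (x : EuclideanSpace ℝ ι) : ℝ) / ‖(x : EuclideanSpace ℝ ι)‖ ^ 2)
    with hμ
  obtain ⟨x, hx⟩ := hev.exists_hasEigenvector
  have hxeig : T x = μ • x := Module.End.mem_eigenspace_iff.1 hx.1
  refine ⟨μ, ⟨x, by simpa using hx.2, ?_⟩, ?_⟩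
  · funext i
    have := congrFun (congrArg WithLp.ofLp hxeig) i
    simpa [hT, Matrix.toEuclideanLin_apply] using this
  · have hb : BddAbove (Set.range fun x : {x : EuclideanSpace ℝ ι // x ≠ 0} =>
        RCLike.re (inner ℝ (T x) (x : EuclideanSpace ℝ ι) : ℝ)
          / ‖(x : EuclideanSpace ℝ ι)‖ ^ 2) := by
      refine ⟨‖LinearMap.toContinuousLinearMap T‖, ?_⟩
      rintro r ⟨z, rfl⟩
      have hz0 : ‖(z : EuclideanSpace ℝ ι)‖ ≠ 0 := norm_ne_zero_iff.2 z.2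
      have hz : (0:ℝ) < ‖(z : EuclideanSpace ℝ ι)‖ ^ 2 := by positivity
      rw [div_le_iff₀ hz]
      have h1 : (inner ℝ (T z) (z : EuclideanSpace ℝ ι) : ℝ)
          ≤ ‖T z‖ * ‖(z : EuclideanSpace ℝ ι)‖ := real_inner_le_norm _ _
      have h2 : ‖T z‖ ≤ ‖LinearMap.toContinuousLinearMap T‖ * ‖(z : EuclideanSpace ℝ ι)‖ :=
        (LinearMap.toContinuousLinearMap T).le_opNorm _
      have h3 : (0:ℝ) ≤ ‖(z : EuclideanSpace ℝ ι)‖ := norm_nonneg _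
      simp only [RCLike.re_to_real]
      nlinarith
    have hle := le_ciSup hb (⟨y, hy⟩ : {x : EuclideanSpace ℝ ι // x ≠ 0})
    simpa [hμ] using hle

/-- for `n ≥ 3`, the largest real eigenvalue `μ₁` of the adjacency
matrix of `Q(n)` satisfies `2(n-1)(5n-1)/(3n) ≤ μ₁`, together with `μ₁ ≤ 4n-5`
for even `n` and `μ₁ ≤ 4n-4` for odd `n`. -/
theorem queens_largest_eigenvalue_bounds (n : ℕ) (hn : 3 ≤ n) (μ₁ : ℝ)
    (h₁ : ∃ x : Fin n × Fin n → ℝ, x ≠ 0 ∧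
      ((queensGraph n).adjMatrix ℝ).mulVec x = μ₁ • x)
    (hmax : ∀ μ : ℝ, (∃ x : Fin n × Fin n → ℝ, x ≠ 0 ∧
      ((queensGraph n).adjMatrix ℝ).mulVec x = μ • x) → μ ≤ μ₁) :
    2 * ((n : ℝ) - 1) * (5 * (n : ℝ) - 1) / (3 * (n : ℝ)) ≤ μ₁ ∧
      (Even n → μ₁ ≤ 4 * (n : ℝ) - 5) ∧ (Odd n → μ₁ ≤ 4 * (n : ℝ) - 4) := by
  classical
  haveI : Nonempty (Fin n × Fin n) := ⟨(⟨0, by omega⟩, ⟨0, by omega⟩)⟩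
  set A := (queensGraph n).adjMatrix ℝ with hA
  have hrow : ∀ v : Fin n × Fin n, (∑ w, A v w) = (qdeg n v : ℝ) := by
    intro v
    simp only [hA, SimpleGraph.adjMatrix_apply]
    rw [Finset.sum_boole]
    rfl
  -- upper bounds via the maximal entry of an eigenvector
  obtain ⟨x, hx0, hxe⟩ := h₁
  obtain ⟨v, -, hv⟩ := Finset.exists_max_image Finset.univ (fun w => |x w|) Finset.univ_nonempty
  have hvpos : 0 < |x v| := by
    rcases (abs_nonneg (x v)).lt_or_eq with h | h
    · exact h
    · exfalso; apply hx0; funext w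
      have h1 := hv w (Finset.mem_univ w)
      have h2 := abs_nonneg (x w)
      exact abs_eq_zero.1 (le_antisymm (by linarith) h2)
  have heq : ∑ w, A v w * x w = μ₁ * x v := by
    have := congrFun hxe v
    simpa [Matrix.mulVec, dotProduct] using this
  have hAnonneg : ∀ u w, (0:ℝ) ≤ A u w := by
    intro u w
    simp only [hA, SimpleGraph.adjMatrix_apply]
    split <;> norm_num
  have habs : |μ₁| * |x v| ≤ (qdeg n v : ℝ) * |x v| := by
    calc |μ₁| * |x v| = |∑ w, A v w * x w| := by rw [← abs_mul, heq]
      _ ≤ ∑ w, |A v w * x w| := Finset.abs_sum_le_sum_abs _ _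
      _ ≤ ∑ w, A v w * |x v| := by
          refine Finset.sum_le_sum (fun w _ => ?_)
          rw [abs_mul, abs_of_nonneg (hAnonneg v w)]
          exact mul_le_mul_of_nonneg_left (hv w (Finset.mem_univ w)) (hAnonneg v w)
      _ = (∑ w, A v w) * |x v| := by rw [Finset.sum_mul]
      _ = (qdeg n v : ℝ) * |x v| := by rw [hrow]
  have hμq : μ₁ ≤ (qdeg n v : ℝ) :=
    le_trans (le_abs_self μ₁) (le_of_mul_le_mul_right habs hvpos)
  have hqe := qdeg_eq n v
  have hi : (v.1:ℕ) < n := v.1.isLt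
  have hj : (v.2:ℕ) < n := v.2.isLt
  have hupper_even : Even n → μ₁ ≤ 4 * (n:ℝ) - 5 := by
    intro he
    obtain ⟨k, hk⟩ := he
    have hq : qdeg n v + 5 ≤ 4 * n := by omega
    refine le_trans hμq ?_
    have : (qdeg n v : ℝ) + 5 ≤ 4 * (n:ℝ) := by exact_mod_cast Nat.cast_le.2 hq
    linarith
  have hupper_odd : Odd n → μ₁ ≤ 4 * (n:ℝ) - 4 := by
    intro _
    have hq : qdeg n v + 4 ≤ 4 * n := by omega
    refine le_trans hμq ?_
    have : (qdeg n v : ℝ) + 4 ≤ 4 * (n:ℝ) := by exact_mod_cast Nat.cast_le.2 hq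
    linarith
  -- lower bound via the Rayleigh quotient of the all-ones vector
  have hherm : A.IsHermitian := by
    refine Matrix.IsHermitian.ext fun i j => ?_
    simp only [hA, SimpleGraph.adjMatrix_apply, star_trivial]
    by_cases h : (queensGraph n).Adj j i
    · rw [if_pos h, if_pos (((queensGraph n).adj_comm j i).1 h)]
    · rw [if_neg h, if_neg (fun h' => h (((queensGraph n).adj_comm i j).1 h'))]
  set y : EuclideanSpace ℝ (Fin n × Fin n) := WithLp.toLp 2 (fun _ => 1) with hy'
  have hy : y ≠ 0 := by
    intro h
    have := congrArg (fun z => z (Classical.arbitrary _)) h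
    simp [hy'] at this
  obtain ⟨μ, hex, hray⟩ := exists_eig_ge_rayleigh A hherm y hy
  have hμμ₁ : μ ≤ μ₁ := hmax μ hex
  have hinner : (inner ℝ ((Matrix.toEuclideanLin A) y) y : ℝ) = ∑ v, (qdeg n v : ℝ) := by
    rw [PiLp.inner_apply]
    simp only [RCLike.inner_apply, conj_trivial]
    have hTy : ∀ i, ((Matrix.toEuclideanLin A) y) i = ∑ w, A i w * y w := by
      intro i
      simp [Matrix.toEuclideanLin_apply, Matrix.mulVec, dotProduct]
    refine Finset.sum_congr rfl (fun w _ => ?_)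
    rw [hTy w]
    simp only [hy', mul_one]
    rw [one_mul]
    exact hrow w
  have hnorm : ‖y‖ ^ 2 = (n:ℝ) ^ 2 := by
    rw [← real_inner_self_eq_norm_sq, PiLp.inner_apply]
    simp only [RCLike.inner_apply, conj_trivial, hy', mul_one]
    rw [Finset.sum_const, Finset.card_univ, Fintype.card_prod, Fintype.card_fin]
    ring
  have hsumR : (3:ℝ) * (∑ v, (qdeg n v : ℝ)) + 12 * (n:ℝ) ^ 2
      = 10 * (n:ℝ) ^ 3 + 2 * (n:ℝ) := by
    have := queens_sum_qdeg n (by omega)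
    exact_mod_cast congrArg (Nat.cast : ℕ → ℝ) this
  have hnne : (n:ℝ) ≠ 0 := by
    exact_mod_cast (by omega : n ≠ 0)
  have hlow : 2 * ((n:ℝ) - 1) * (5 * (n:ℝ) - 1) / (3 * (n:ℝ))
      = (∑ v, (qdeg n v : ℝ)) / (n:ℝ) ^ 2 := by
    rw [div_eq_div_iff (by positivity) (by positivity)]
    linear_combination (-(n:ℝ)) * hsumR
  have hms : (∑ v, (qdeg n v : ℝ)) / (n:ℝ) ^ 2 ≤ μ := by
    rw [← hinner, ← hnorm]; exact hray
  exact ⟨by rw [hlow]; exact le_trans hms hμμ₁, hupper_even, hupper_odd⟩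
end

section
/- For every n ≥ 3, the n-Queens' graph Q(n) admits an equitable partition of its vertex set with exactly (⌈n/2⌉ + 1)·⌈n/2⌉/2 cells; that is, there exists a partition V(Q(n)) = V₁ ∪ … ∪ V_k with k = (⌈n/2⌉ + 1)·⌈n/2⌉/2 pairwise disjoint nonempty cells such that for all indices i, j and all vertices u, v ∈ V_i, the number of neighbors of u in V_j equals the number of neighbors of v in V_j. -/
namespace QEP
open Finset

/-- The triangle `{(a,b) : a ≤ b < m}` as a finset of `ℕ × ℕ`. -/
def tri (m : ℕ) : Finset (ℕ × ℕ) :=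
  (Finset.range m).biUnion fun b => (Finset.range (b+1)).image fun a => (a, b)

lemma mem_tri {m a b : ℕ} : (a, b) ∈ tri m ↔ a ≤ b ∧ b < m := by
  simp only [tri, Finset.mem_biUnion, Finset.mem_image, Finset.mem_range]
  constructor
  · rintro ⟨x, hx, y, hy, h⟩
    rw [Prod.mk.injEq] at h
    omega
  · intro h
    exact ⟨b, h.2, a, by omega, rfl⟩

lemma sum_succ_range (m : ℕ) : ∑ x ∈ Finset.range m, (x + 1) = (m + 1) * m / 2 := by
  induction m with
  | zero => rfl
  | succ k ih =>
    rw [Finset.sum_range_succ, ih]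
    have : (k + 1 + 1) * (k + 1) = (k + 1) * k + (k + 1) * 2 := by ring
    omega

lemma card_tri (m : ℕ) : (tri m).card = (m + 1) * m / 2 := by
  rw [tri, Finset.card_biUnion]
  · have h : ∀ b ∈ Finset.range m, ((Finset.range (b+1)).image fun a => (a, b)).card = b + 1 := by
      intro b _
      rw [Finset.card_image_of_injective _ (fun x y h => (Prod.mk.injEq _ _ _ _ ▸ h).1),
        Finset.card_range]
    rw [Finset.sum_congr rfl h, sum_succ_range]
  · intro b _ b' _ hbb
    simp only [Finset.disjoint_left, Finset.mem_image, Finset.mem_range]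
    rintro p ⟨x, _, rfl⟩ ⟨y, _, h⟩
    rw [Prod.mk.injEq] at h
    exact hbb h.2.symm

variable {n : ℕ}

/-- Fold a coordinate to its distance-to-edge class. -/
def hf (n : ℕ) (i : Fin n) : ℕ := min i.val (n - 1 - i.val)

/-- Canonical invariant of a square under the dihedral symmetries. -/
def can (n : ℕ) (p : Fin n × Fin n) : ℕ × ℕ :=
  (min (hf n p.1) (hf n p.2), max (hf n p.1) (hf n p.2))

lemma can_mem_tri (p : Fin n × Fin n) : can n p ∈ tri ((n + 1) / 2) := by
  have h1 := p.1.isLt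
  have h2 := p.2.isLt
  rw [can, mem_tri]
  unfold hf
  omega

lemma adj_iff {u v : Fin n × Fin n} : (queensGraph n).Adj u v ↔ u ≠ v ∧ (u.1 = v.1 ∨ u.2 = v.2 ∨
    u.1.val + u.2.val = v.1.val + v.2.val ∨ u.1.val + v.2.val = v.1.val + u.2.val) := Iff.rfl

/-- A board symmetry good for our purposes: a graph automorphism preserving `can`. -/
def Good (n : ℕ) (g : (Fin n × Fin n) ≃ (Fin n × Fin n)) : Prop :=
  (∀ w w', (queensGraph n).Adj (g w) (g w') ↔ (queensGraph n).Adj w w') ∧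
  (∀ w, can n (g w) = can n w)

lemma good_refl : Good n (Equiv.refl _) := ⟨fun _ _ => Iff.rfl, fun _ => rfl⟩

lemma good_trans {g h : (Fin n × Fin n) ≃ (Fin n × Fin n)} (hg : Good n g) (hh : Good n h) :
    Good n (g.trans h) :=
  ⟨fun w w' => (hh.1 (g w) (g w')).trans (hg.1 w w'),
   fun w => (hh.2 (g w)).trans (hg.2 w)⟩

lemma good_rev1 : Good n (Equiv.prodCongr Fin.revPerm (Equiv.refl _)) := by
  constructor
  · rintro ⟨i, j⟩ ⟨p, q⟩
    have hi := i.isLt; have hp := p.isLt; have hj := j.isLt; have hq := q.isLt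
    simp only [adj_iff, Equiv.prodCongr_apply, Prod.map, Fin.revPerm_apply, Equiv.refl_apply,
      ne_eq, Prod.mk.injEq, Fin.ext_iff, Fin.val_rev]
    omega
  · rintro ⟨i, j⟩
    have hi := i.isLt
    simp only [can, hf, Equiv.prodCongr_apply, Prod.map, Fin.revPerm_apply, Equiv.refl_apply,
      Fin.val_rev, Prod.mk.injEq]
    omega

lemma good_rev2 : Good n (Equiv.prodCongr (Equiv.refl _) Fin.revPerm) := by
  constructor
  · rintro ⟨i, j⟩ ⟨p, q⟩
    have hi := i.isLt; have hp := p.isLt; have hj := j.isLt; have hq := q.isLt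
    simp only [adj_iff, Equiv.prodCongr_apply, Prod.map, Fin.revPerm_apply, Equiv.refl_apply,
      ne_eq, Prod.mk.injEq, Fin.ext_iff, Fin.val_rev]
    omega
  · rintro ⟨i, j⟩
    have hj := j.isLt
    simp only [can, hf, Equiv.prodCongr_apply, Prod.map, Fin.revPerm_apply, Equiv.refl_apply,
      Fin.val_rev, Prod.mk.injEq]
    omega

lemma good_swap : Good n (Equiv.prodComm (Fin n) (Fin n)) := by
  constructor
  · rintro ⟨i, j⟩ ⟨p, q⟩
    have hi := i.isLt; have hp := p.isLt; have hj := j.isLt; have hq := q.isLt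
    simp only [adj_iff, Equiv.prodComm_apply, Prod.swap, ne_eq, Prod.mk.injEq, Fin.ext_iff]
    omega
  · rintro ⟨i, j⟩
    simp only [can, hf, Equiv.prodComm_apply, Prod.swap, Prod.mk.injEq]
    omega

lemma hf_cases {i p : Fin n} (h : hf n i = hf n p) : i = p ∨ i = p.rev := by
  have hi := i.isLt; have hp := p.isLt
  rw [Fin.ext_iff, Fin.ext_iff, Fin.val_rev]
  unfold hf at h
  omega

lemma exists_good {u v : Fin n × Fin n} (h : can n u = can n v) :
    ∃ g, Good n g ∧ g u = v := by
  obtain ⟨i, j⟩ := u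
  obtain ⟨p, q⟩ := v
  have h' : (hf n i = hf n p ∧ hf n j = hf n q) ∨ (hf n i = hf n q ∧ hf n j = hf n p) := by
    simp only [can, Prod.mk.injEq] at h
    omega
  rcases h' with ⟨h1, h2⟩ | ⟨h1, h2⟩
  · rcases hf_cases h1 with rfl | rfl <;> rcases hf_cases h2 with rfl | rfl
    · exact ⟨_, good_refl, rfl⟩
    · exact ⟨_, good_rev2, by simp [Prod.ext_iff]⟩
    · exact ⟨_, good_rev1, by simp [Prod.ext_iff]⟩
    · exact ⟨_, good_trans good_rev1 good_rev2, by simp [Prod.ext_iff]⟩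
  · rcases hf_cases h1 with h1' | h1' <;> rcases hf_cases h2 with h2' | h2'
    · exact ⟨_, good_swap, by simp [Prod.ext_iff, h1', h2']⟩
    · exact ⟨_, good_trans good_swap good_rev1, by simp [Prod.ext_iff, h1', h2']⟩
    · exact ⟨_, good_trans good_swap good_rev2, by simp [Prod.ext_iff, h1', h2']⟩
    · exact ⟨_, good_trans good_swap (good_trans good_rev1 good_rev2),
        by simp [Prod.ext_iff, h1', h2']⟩

end QEP

/-- for `n ≥ 3`, `Q(n)` has an equitable partition of its vertex
set with exactly `(⌈n/2⌉ + 1) * ⌈n/2⌉ / 2` cells (note `⌈n/2⌉ = (n + 1) / 2` in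
natural number arithmetic): the cells are nonempty, pairwise disjoint, cover all
vertices, and any two vertices of a cell have the same number of neighbours in
each cell. -/
theorem queens_equitable_partition (n : ℕ) (hn : 3 ≤ n) :
    ∃ C : Fin (((n + 1) / 2 + 1) * ((n + 1) / 2) / 2) → Finset (Fin n × Fin n),
      (∀ i, (C i).Nonempty) ∧
      (∀ i j, i ≠ j → Disjoint (C i) (C j)) ∧
      (∀ v, ∃ i, v ∈ C i) ∧
      (∀ i j, ∀ u ∈ C i, ∀ v ∈ C i,
        ((queensGraph n).neighborFinset u ∩ C j).card =
          ((queensGraph n).neighborFinset v ∩ C j).card) := by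
  classical
  open Finset in
  have hcard : (QEP.tri ((n + 1) / 2)).card = ((n + 1) / 2 + 1) * ((n + 1) / 2) / 2 :=
    QEP.card_tri _
  let e := Finset.equivFinOfCardEq hcard
  let f : Fin n × Fin n → Fin (((n + 1) / 2 + 1) * ((n + 1) / 2) / 2) :=
    fun p => e ⟨QEP.can n p, QEP.can_mem_tri p⟩
  have hf_can : ∀ p q, QEP.can n p = QEP.can n q → f p = f q := by
    intro p q h
    simp only [f]
    congr 1
    exact Subtype.ext h
  refine ⟨fun i => Finset.univ.filter (fun p => f p = i), ?_, ?_, ?_, ?_⟩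
  · -- nonempty
    intro i
    rcases hsv : e.symm i with ⟨⟨a, b⟩, hmem⟩
    rw [QEP.mem_tri] at hmem
    have ha : a < n := by omega
    have hb : b < n := by omega
    refine ⟨(⟨a, ha⟩, ⟨b, hb⟩), Finset.mem_filter.mpr ⟨Finset.mem_univ _, ?_⟩⟩
    have hcan : QEP.can n (⟨a, ha⟩, ⟨b, hb⟩) = (a, b) := by
      simp only [QEP.can, QEP.hf]
      rw [Prod.mk.injEq]
      omega
    have : f (⟨a, ha⟩, ⟨b, hb⟩) = e ⟨(a, b), QEP.mem_tri.mpr hmem⟩ := by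
      simp only [f]
      congr 1
      exact Subtype.ext hcan
    rw [this, ← hsv, Equiv.apply_symm_apply]
  · -- disjoint
    intro i j hij
    simp only [Finset.disjoint_left, Finset.mem_filter]
    rintro p ⟨-, rfl⟩ ⟨-, h⟩
    exact hij h
  · -- cover
    intro v
    exact ⟨f v, Finset.mem_filter.mpr ⟨Finset.mem_univ _, rfl⟩⟩
  · -- equitable
    intro i j u hu v hv
    rw [Finset.mem_filter] at hu hv
    have hcc : QEP.can n u = QEP.can n v :=
      congrArg Subtype.val (e.injective ((hu.2.trans hv.2.symm) :
        e ⟨QEP.can n u, QEP.can_mem_tri u⟩ = e ⟨QEP.can n v, QEP.can_mem_tri v⟩))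
    obtain ⟨g, hg, hgu⟩ := QEP.exists_good hcc
    have himg : (queensGraph n).neighborFinset v ∩ (Finset.univ.filter (fun p => f p = j)) =
        ((queensGraph n).neighborFinset u ∩ (Finset.univ.filter (fun p => f p = j))).image g := by
      ext w
      simp only [Finset.mem_image, Finset.mem_inter, Finset.mem_filter,
        SimpleGraph.mem_neighborFinset, Finset.mem_univ, true_and]
      constructor
      · rintro ⟨hadj, hfw⟩
        refine ⟨g.symm w, ⟨?_, ?_⟩, g.apply_symm_apply w⟩
        · have h2 := hg.1 u (g.symm w)
          rw [hgu, Equiv.apply_symm_apply] at h2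
          exact h2.mp hadj
        · have hcw : QEP.can n (g.symm w) = QEP.can n w := by
            have := hg.2 (g.symm w)
            rw [Equiv.apply_symm_apply] at this
            exact this.symm
          rw [hf_can _ _ hcw, hfw]
      · rintro ⟨w', ⟨hadj, hfw'⟩, rfl⟩
        have h2 := hg.1 u w'
        rw [hgu] at h2
        exact ⟨h2.mpr hadj, (hf_can _ _ (hg.2 w')).trans hfw'⟩
    rw [himg, Finset.card_image_of_injective _ g.injective]
end
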